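/- arXiv:2104.04949 — 5 statements merged into one kernel-verified Lean document; each statement's English description precedes it below -/
import Mathlib

section
/- For p > 1, real numbers α, β with -1 < α, β < p-1, and q the conjugate exponent of p, the sum W¹(n) = ∑_{m=1}^∞ (m+n)^{-(1+(β-α)/p)} · n^{(1+α)/q} / m^{1-(1+β)/p} satisfies W¹(n) ≤ B((1+β)/p, 1-(1+α)/p) · n^α for all n ∈ ℕ, where B is the Beta function. -/
open MeasureTheory Set

theorem stmt_3 (p q α β : ℝ) (hp : 1 < p) (hpq : 1/p + 1/q = 1)
    (hα : -1 < α) (hα' : α < p - 1) (hβ : -1 < β) (hβ' : β < p - 1)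
    (n : ℕ) (hn : 1 ≤ n) :
    (∑' m : ℕ, ((m : ℝ) + 1 + (n : ℝ)) ^ (-(1 + (β - α)/p)) *
        ((n : ℝ) ^ ((1 + α)/q) / ((m : ℝ) + 1) ^ (1 - (1 + β)/p)))
      ≤ (∫ t in Set.Ioi (0:ℝ),
            t ^ ((1 + β)/p - 1) / (1 + t) ^ ((1 + β)/p + (1 - (1 + α)/p))) * (n : ℝ) ^ α := by
  have hp0 : (0:ℝ) < p := by linarith
  set c : ℝ := (1 + β)/p with hc
  set d : ℝ := 1 - (1 + α)/p with hd
  have hc0 : 0 < c := div_pos (by linarith) hp0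
  have hc1 : c < 1 := (div_lt_one hp0).2 (by linarith)
  have hd0 : 0 < d := by
    have : (1+α)/p < 1 := (div_lt_one hp0).2 (by linarith)
    simp only [hd]; linarith
  have hd1 : d < 1 := by
    have : 0 < (1+α)/p := div_pos (by linarith) hp0
    simp only [hd]; linarith
  have hn0 : (0:ℝ) < (n:ℝ) := by exact_mod_cast Nat.lt_of_lt_of_le Nat.zero_lt_one hn
  -- exponent identities
  have hcd : -(1 + (β - α)/p) = -(c + d) := by
    simp only [hc, hd]; field_simp; ring
  have hq : (1 + α)/q = α + d := by
    have h1q : 1/q = 1 - 1/p := by linarith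
    have hq0 : q ≠ 0 := by
      intro h
      rw [h, div_zero] at h1q
      have : 1/p = 1 := by linarith
      have : p = 1 := by
        field_simp at this; linarith
      linarith
    have : (1 + α)/q = (1 + α) * (1 - 1/p) := by
      rw [div_eq_mul_inv, ← one_div, h1q]
    rw [this]; simp only [hd]; field_simp; ring
  set f : ℝ → ℝ := fun x => x ^ (c - 1) * (x + (n:ℝ)) ^ (-(c + d)) with hf
  -- each summand equals n^(α+d) * f (m+1)
  have hterm : ∀ m : ℕ, ((m : ℝ) + 1 + (n : ℝ)) ^ (-(1 + (β - α)/p)) *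
      ((n : ℝ) ^ ((1 + α)/q) / ((m : ℝ) + 1) ^ (1 - (1 + β)/p)) =
      (n:ℝ) ^ (α + d) * f ((m:ℝ) + 1) := by
    intro m
    have hm1 : (0:ℝ) < (m:ℝ) + 1 := by positivity
    have h1 : ((m:ℝ) + 1) ^ (c - 1) = (((m:ℝ) + 1) ^ (1 - c))⁻¹ := by
      rw [← Real.rpow_neg hm1.le]; ring_nf
    have h2 : (1 : ℝ) - (1 + β)/p = 1 - c := by rw [hc]
    rw [hcd, hq, h2, hf]
    simp only
    rw [h1]
    ring
  have hn1 : (1:ℝ) ≤ (n:ℝ) := by exact_mod_cast hn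
  have hf_meas : Measurable f := by
    simp only [hf]; fun_prop
  -- integrability of f on Ioi 0
  have hfint : IntegrableOn f (Ioi (0:ℝ)) := by
    have hsplit : Ioc (0:ℝ) 1 ∪ Ioi (1:ℝ) = Ioi 0 := Ioc_union_Ioi_eq_Ioi (by norm_num)
    rw [← hsplit]
    apply IntegrableOn.union
    · -- on (0,1]: dominated by x ^ (c-1)
      have hint : IntegrableOn (fun x : ℝ => x ^ (c - 1)) (Ioc (0:ℝ) 1) := by
        have := intervalIntegral.intervalIntegrable_rpow' (a := 0) (b := 1) (r := c - 1) (by linarith)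
        rwa [intervalIntegrable_iff_integrableOn_Ioc_of_le (by norm_num)] at this
      apply Integrable.mono' hint (hf_meas.aestronglyMeasurable.restrict)
      filter_upwards [ae_restrict_mem measurableSet_Ioc] with x hx
      have hx0 : 0 < x := hx.1
      rw [Real.norm_eq_abs, abs_of_nonneg (by positivity)]
      have h1 : (x + (n:ℝ)) ^ (-(c + d)) ≤ 1 :=
        Real.rpow_le_one_of_one_le_of_nonpos (by linarith) (by linarith)
      calc x ^ (c-1) * (x + (n:ℝ)) ^ (-(c + d)) ≤ x ^ (c-1) * 1 := by
            apply mul_le_mul_of_nonneg_left h1 (by positivity)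
        _ = x ^ (c-1) := by ring
    · -- on (1,∞): dominated by x ^ (-1-d)
      have hint : IntegrableOn (fun x : ℝ => x ^ (-1 - d)) (Ioi (1:ℝ)) :=
        integrableOn_Ioi_rpow_of_lt (by linarith) one_pos
      apply Integrable.mono' hint (hf_meas.aestronglyMeasurable.restrict)
      filter_upwards [ae_restrict_mem measurableSet_Ioi] with x hx
      have hx0 : (0:ℝ) < x := lt_trans one_pos hx
      rw [Real.norm_eq_abs, abs_of_nonneg (by positivity)]
      have h1 : (x + (n:ℝ)) ^ (-(c + d)) ≤ x ^ (-(c + d)) :=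
        Real.rpow_le_rpow_of_nonpos hx0 (by linarith) (by linarith)
      calc x ^ (c-1) * (x + (n:ℝ)) ^ (-(c + d)) ≤ x ^ (c-1) * x ^ (-(c + d)) :=
            mul_le_mul_of_nonneg_left h1 (by positivity)
        _ = x ^ (-1 - d) := by rw [← Real.rpow_add hx0]; ring_nf
  -- partial sum bound: ∑_{m<N} f(m+1) ≤ ∫_{Ioi 0} f
  have hsum_int : ∀ N : ℕ, ∑ m ∈ Finset.range N, f ((m:ℝ) + 1) ≤ ∫ x in Ioi (0:ℝ), f x := by
    intro N
    have hstep : ∀ m : ℕ, f ((m:ℝ) + 1) ≤ ∫ x in Ioc (m:ℝ) ((m:ℝ)+1), f x := by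
      intro m
      have hsub : Ioc (m:ℝ) ((m:ℝ)+1) ⊆ Ioi 0 := fun x hx =>
        lt_of_le_of_lt (Nat.cast_nonneg m) hx.1
      have hvol : volume (Ioc (m:ℝ) ((m:ℝ)+1)) = 1 := by
        rw [Real.volume_Ioc]; norm_num
      have := setIntegral_ge_of_const_le_real (μ := volume) (c := f ((m:ℝ)+1))
        measurableSet_Ioc (by rw [hvol]; exact ENNReal.one_ne_top)
        (fun x hx => by
          have hx0 : 0 < x := lt_of_le_of_lt (Nat.cast_nonneg m) hx.1
          have h1 : ((m:ℝ)+1) ^ (c-1) ≤ x ^ (c-1) :=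
            Real.rpow_le_rpow_of_nonpos hx0 hx.2 (by linarith)
          have h2 : ((m:ℝ)+1+(n:ℝ)) ^ (-(c+d)) ≤ (x+(n:ℝ)) ^ (-(c+d)) :=
            Real.rpow_le_rpow_of_nonpos (by linarith) (by linarith [hx.2]) (by linarith)
          exact mul_le_mul h1 h2 (by positivity) (by positivity))
        (hfint.mono_set hsub)
      rw [measureReal_def, hvol] at this
      simpa only [ENNReal.toReal_one, one_smul, mul_one] using this
    calc ∑ m ∈ Finset.range N, f ((m:ℝ) + 1)
        ≤ ∑ m ∈ Finset.range N, ∫ x in Ioc (m:ℝ) ((m:ℝ)+1), f x :=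
          Finset.sum_le_sum (fun m _ => hstep m)
      _ = ∫ x in Ioc (0:ℝ) (N:ℝ), f x := by
          have hii : ∀ k : ℕ, k < N → IntervalIntegrable f volume ((k:ℝ)) ((k:ℝ)+1) := by
            intro k _
            rw [intervalIntegrable_iff_integrableOn_Ioc_of_le (by linarith)]
            exact hfint.mono_set (fun x hx => lt_of_le_of_lt (Nat.cast_nonneg k) hx.1)
          have hadj := intervalIntegral.sum_integral_adjacent_intervals
            (a := fun k : ℕ => (k:ℝ)) (μ := volume) (n := N)
            (fun k hk => by push_cast; exact hii k hk)
          push_cast at hadj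
          rw [← intervalIntegral.integral_of_le (show (0:ℝ) ≤ (N:ℝ) from Nat.cast_nonneg N),
            ← hadj]
          exact Finset.sum_congr rfl fun m _ =>
            (intervalIntegral.integral_of_le (by linarith)).symm
      _ ≤ ∫ x in Ioi (0:ℝ), f x := by
          apply setIntegral_mono_set hfint
          · filter_upwards [ae_restrict_mem measurableSet_Ioi] with x hx
            have hx0 : (0:ℝ) < x := hx
            positivity
          · exact HasSubset.Subset.eventuallyLE Ioc_subset_Ioi_self
  -- change of variables: ∫_{Ioi 0} f = n^(-d) * B
  set B : ℝ := ∫ t in Set.Ioi (0:ℝ),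
      t ^ ((1 + β)/p - 1) / (1 + t) ^ ((1 + β)/p + (1 - (1 + α)/p)) with hB
  have hBform : B = ∫ t in Set.Ioi (0:ℝ), t ^ (c - 1) / (1 + t) ^ (c + d) := by rfl
  have hchange : ∫ x in Ioi (0:ℝ), f x = (n:ℝ) ^ (-d) * B := by
    have h1 := integral_comp_mul_left_Ioi f 0 hn0
    rw [mul_zero] at h1
    have h2 : ∫ x in Ioi (0:ℝ), f ((n:ℝ) * x)
        = ∫ x in Ioi (0:ℝ), (n:ℝ) ^ (-1 - d) * (x ^ (c-1) / (1 + x) ^ (c + d)) := by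
      apply setIntegral_congr_fun measurableSet_Ioi
      intro x hx
      have hx0 : (0:ℝ) < x := hx
      simp only [hf]
      rw [Real.mul_rpow hn0.le hx0.le]
      have : (n:ℝ) * x + (n:ℝ) = (n:ℝ) * (1 + x) := by ring
      rw [this, Real.mul_rpow hn0.le (by linarith)]
      rw [Real.rpow_neg (by linarith : (0:ℝ) ≤ 1 + x), ← div_eq_mul_inv]
      have hkey : (n:ℝ) ^ (c-1) * (n:ℝ) ^ (-(c+d)) = (n:ℝ) ^ (-1-d) := by
        rw [← Real.rpow_add hn0]; congr 1; ring
      rw [← hkey]; ring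
    rw [h2, integral_const_mul, smul_eq_mul] at h1
    rw [← hBform] at h1
    have hne : (n:ℝ) ≠ 0 := ne_of_gt hn0
    have hval : ∫ x in Ioi (0:ℝ), f x = (n:ℝ) * ((n:ℝ) ^ (-1 - d) * B) := by
      calc ∫ x in Ioi (0:ℝ), f x = (n:ℝ) * ((n:ℝ)⁻¹ * ∫ x in Ioi (0:ℝ), f x) := by
            field_simp
        _ = (n:ℝ) * ((n:ℝ) ^ (-1-d) * B) := by rw [← h1]
    have hmul : (n:ℝ) ^ (-d) = (n:ℝ) * (n:ℝ) ^ (-1-d) := by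
      rw [show -d = 1 + (-1-d) by ring, Real.rpow_add hn0, Real.rpow_one]
    rw [hval, hmul]; ring
  -- conclude
  have hBnonneg : 0 ≤ B := by
    rw [hBform]
    apply setIntegral_nonneg measurableSet_Ioi
    intro x hx
    have hx0 : (0:ℝ) < x := hx
    positivity
  have key : ∀ N : ℕ, ∑ m ∈ Finset.range N, ((m : ℝ) + 1 + (n : ℝ)) ^ (-(1 + (β - α)/p)) *
      ((n : ℝ) ^ ((1 + α)/q) / ((m : ℝ) + 1) ^ (1 - (1 + β)/p)) ≤ B * (n:ℝ) ^ α := by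
    intro N
    calc ∑ m ∈ Finset.range N, ((m : ℝ) + 1 + (n : ℝ)) ^ (-(1 + (β - α)/p)) *
          ((n : ℝ) ^ ((1 + α)/q) / ((m : ℝ) + 1) ^ (1 - (1 + β)/p))
        = (n:ℝ) ^ (α + d) * ∑ m ∈ Finset.range N, f ((m:ℝ) + 1) := by
          rw [Finset.mul_sum]
          exact Finset.sum_congr rfl (fun m _ => hterm m)
      _ ≤ (n:ℝ) ^ (α + d) * ∫ x in Ioi (0:ℝ), f x :=
          mul_le_mul_of_nonneg_left (hsum_int N) (by positivity)
      _ = (n:ℝ) ^ (α + d) * ((n:ℝ) ^ (-d) * B) := by rw [hchange]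
      _ = ((n:ℝ) ^ (α + d) * (n:ℝ) ^ (-d)) * B := by ring
      _ = (n:ℝ) ^ α * B := by rw [← Real.rpow_add hn0]; ring_nf
      _ = B * (n:ℝ) ^ α := by ring
  apply Real.tsum_le_of_sum_range_le _ key
  intro m
  have hm1 : (0:ℝ) < (m:ℝ) + 1 := by positivity
  positivity
end

section
/- For p > 1, real numbers α, β with -1 < α, β < p-1, and q the conjugate exponent of p, the sum W²(m) = ∑_{n=1}^∞ (m+n)^{-(1+(β-α)/p)} · m^{(q-1)(1-(1+β)/p)} / n^{(1+α)/p} satisfies W²(m) ≤ B((1+β)/p, 1-(1+α)/p) · m^{(1-q)β} for all m ∈ ℕ. -/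
open MeasureTheory

open Real Set in
private lemma aux_mono {M c a : ℝ} (hM : 0 < M) (hc : 0 ≤ c) (ha : 0 ≤ a) {x y : ℝ}
    (hx : 0 < x) (hxy : x ≤ y) :
    (M + y) ^ (-c) * y ^ (-a) ≤ (M + x) ^ (-c) * x ^ (-a) :=
  mul_le_mul (Real.rpow_le_rpow_of_nonpos (by linarith) (by linarith) (neg_nonpos.2 hc))
    (Real.rpow_le_rpow_of_nonpos hx hxy (neg_nonpos.2 ha))
    (Real.rpow_nonneg (by linarith) _) (Real.rpow_nonneg (by linarith) _)

open Real Set in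
private lemma aux_integrable {M c a : ℝ} (hM : 1 ≤ M) (hc : 0 ≤ c) (ha0 : 0 ≤ a) (ha1 : a < 1)
    (hca : 1 < c + a) :
    IntegrableOn (fun x : ℝ => (M + x) ^ (-c) * x ^ (-a)) (Ioi 0) := by
  have hM0 : (0:ℝ) < M := by linarith
  have hmeas : AEStronglyMeasurable (fun x : ℝ => (M + x) ^ (-c) * x ^ (-a)) volume := by
    apply Measurable.aestronglyMeasurable
    fun_prop
  have h1 : IntegrableOn (fun x : ℝ => (M + x) ^ (-c) * x ^ (-a)) (Ioc 0 1) := by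
    have hi : IntegrableOn (fun x : ℝ => x ^ (-a)) (Ioc (0:ℝ) 1) := by
      rw [← intervalIntegrable_iff_integrableOn_Ioc_of_le zero_le_one]
      exact intervalIntegral.intervalIntegrable_rpow' (by linarith)
    refine hi.mono' hmeas.restrict ?_
    rw [ae_restrict_iff' measurableSet_Ioc]
    refine .of_forall fun x hx => ?_
    have hx0 : 0 < x := hx.1
    have h1 : (M + x) ^ (-c) ≤ 1 :=
      Real.rpow_le_one_of_one_le_of_nonpos (by linarith) (by linarith)
    have h2 : (0:ℝ) ≤ x ^ (-a) := Real.rpow_nonneg hx0.le _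
    rw [Real.norm_eq_abs, abs_of_nonneg (by positivity)]
    calc (M + x) ^ (-c) * x ^ (-a) ≤ 1 * x ^ (-a) :=
          mul_le_mul_of_nonneg_right h1 h2
      _ = x ^ (-a) := one_mul _
  have h2 : IntegrableOn (fun x : ℝ => (M + x) ^ (-c) * x ^ (-a)) (Ioi 1) := by
    have hi : IntegrableOn (fun x : ℝ => x ^ (-(c + a))) (Ioi (1:ℝ)) :=
      integrableOn_Ioi_rpow_of_lt (by linarith) zero_lt_one
    refine hi.mono' hmeas.restrict ?_
    rw [ae_restrict_iff' measurableSet_Ioi]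
    refine .of_forall fun x hx => ?_
    have hx1 : (1:ℝ) < x := hx
    have hx0 : (0:ℝ) < x := by linarith
    have h1 : (M + x) ^ (-c) ≤ x ^ (-c) :=
      Real.rpow_le_rpow_of_nonpos hx0 (by linarith) (by linarith)
    rw [Real.norm_eq_abs, abs_of_nonneg (by positivity)]
    calc (M + x) ^ (-c) * x ^ (-a) ≤ x ^ (-c) * x ^ (-a) :=
          mul_le_mul_of_nonneg_right h1 (Real.rpow_nonneg hx0.le _)
      _ = x ^ (-(c + a)) := by rw [← Real.rpow_add hx0]; ring_nf
  have := h1.union h2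
  rwa [Set.Ioc_union_Ioi_eq_Ioi zero_le_one] at this

open Real Set in
private lemma aux_sum_le {f : ℝ → ℝ} (hf : IntegrableOn f (Ioi 0))
    (hpos : ∀ x ∈ Ioi (0:ℝ), 0 ≤ f x)
    (hmono : ∀ x y : ℝ, 0 < x → x ≤ y → f y ≤ f x) :
    (∑' n : ℕ, f ((n : ℝ) + 1)) ≤ ∫ x in Ioi (0:ℝ), f x := by
  apply Real.tsum_le_of_sum_range_le (fun n => hpos _ (Set.mem_Ioi.2 (by positivity)))
  intro N
  have key : ∀ i : ℕ, f ((i : ℝ) + 1) ≤ ∫ x in Ioc (i:ℝ) ((i:ℝ)+1), f x := by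
    intro i
    have h0 : f ((i : ℝ) + 1) = ∫ _ in Ioc (i:ℝ) ((i:ℝ)+1), f ((i : ℝ) + 1) := by
      rw [setIntegral_const, Real.volume_real_Ioc]
      simp
    rw [h0]
    refine setIntegral_mono_on (integrableOn_const ?_)
      (hf.mono_set fun x hx => ?_) measurableSet_Ioc fun x hx => ?_
    · rw [Real.volume_Ioc]; exact ENNReal.ofReal_ne_top
    · exact lt_of_le_of_lt (Nat.cast_nonneg i) hx.1
    · exact hmono x _ (lt_of_le_of_lt (Nat.cast_nonneg i) hx.1) hx.2
  calc ∑ i ∈ Finset.range N, f ((i : ℝ) + 1)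
      ≤ ∑ i ∈ Finset.range N, ∫ x in Ioc (i:ℝ) ((i:ℝ)+1), f x :=
        Finset.sum_le_sum fun i _ => key i
    _ = ∫ x in ⋃ i ∈ Finset.range N, Ioc (i:ℝ) ((i:ℝ)+1), f x := by
        rw [integral_biUnion_finset _ (fun i _ => measurableSet_Ioc) ?_
          (fun i _ => hf.mono_set fun x hx => lt_of_le_of_lt (Nat.cast_nonneg i) hx.1)]
        intro i _ j _ hij
        rw [Function.onFun, Set.Ioc_disjoint_Ioc]
        rcases Nat.lt_or_ge i j with h | h
        · have : (i:ℝ) + 1 ≤ j := by exact_mod_cast h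
          exact le_trans (min_le_left _ _) (le_trans this (le_max_right _ _))
        · have hj : j < i := lt_of_le_of_ne h (fun e => hij e.symm)
          have : (j:ℝ) + 1 ≤ i := by exact_mod_cast hj
          exact le_trans (min_le_right _ _) (le_trans this (le_max_left _ _))
    _ ≤ ∫ x in Ioi (0:ℝ), f x := by
        refine setIntegral_mono_set hf ?_ (HasSubset.Subset.eventuallyLE ?_)
        · exact (ae_restrict_iff' measurableSet_Ioi).mpr
            (Filter.Eventually.of_forall fun x hx => hpos x hx)
        · exact Set.iUnion₂_subset fun i _ x hx =>
            lt_of_le_of_lt (Nat.cast_nonneg i) hx.1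

open Real Set in
private lemma aux_scale {M c a b : ℝ} (hM : 0 < M) (hb : 1 - (c + a) = -b) :
    (∫ x in Ioi (0:ℝ), (M + x) ^ (-c) * x ^ (-a))
      = M ^ (-b) * ∫ x in Ioi (0:ℝ), (1 + x) ^ (-c) * x ^ (-a) := by
  have h := MeasureTheory.integral_comp_mul_left_Ioi
    (fun x => (M + x) ^ (-c) * x ^ (-a)) 0 hM
  rw [mul_zero, smul_eq_mul] at h
  beta_reduce at h
  have h2 : (∫ x in Ioi (0:ℝ), (M + M * x) ^ (-c) * (M * x) ^ (-a))
      = (M ^ (-c) * M ^ (-a)) * ∫ x in Ioi (0:ℝ), (1 + x) ^ (-c) * x ^ (-a) := by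
    rw [← MeasureTheory.integral_const_mul]
    refine setIntegral_congr_fun measurableSet_Ioi fun x hx => ?_
    have hx0 : (0:ℝ) < x := hx
    have e1 : M + M * x = M * (1 + x) := by ring
    rw [e1, Real.mul_rpow hM.le (by linarith), Real.mul_rpow hM.le hx0.le]
    ring
  rw [h2] at h
  have h3 : (∫ x in Ioi (0:ℝ), (M + x) ^ (-c) * x ^ (-a))
      = M * ((M ^ (-c) * M ^ (-a)) * ∫ x in Ioi (0:ℝ), (1 + x) ^ (-c) * x ^ (-a)) := by
    rw [h, ← mul_assoc, mul_inv_cancel₀ hM.ne', one_mul]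
  have hpow : M * (M ^ (-c) * M ^ (-a)) = M ^ (-b) := by
    have e : -b = 1 + (-c + -a) := by linarith
    rw [e, Real.rpow_add hM, Real.rpow_add hM, Real.rpow_one]
  rw [h3, ← mul_assoc, hpow]

open Real Set in
private lemma aux_inv {a b c : ℝ} (hab : c - b - 1 = -a) :
    (∫ x in Ioi (0:ℝ), (1 + x) ^ (-c) * x ^ (-a))
      = ∫ t in Ioi (0:ℝ), t ^ (b - 1) / (1 + t) ^ c := by
  rw [← MeasureTheory.integral_comp_rpow_Ioi (fun t => t ^ (b - 1) / (1 + t) ^ c)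
    (p := -1) (by norm_num)]
  refine setIntegral_congr_fun measurableSet_Ioi fun x hx => ?_
  have hx0 : (0:ℝ) < x := hx
  have hinv : x ^ (-1:ℝ) = x⁻¹ := Real.rpow_neg_one x
  have hx1 : (0:ℝ) < 1 + x := by linarith
  have e1 : (x ^ (-1:ℝ)) ^ (b - 1) = x ^ (1 - b) := by
    rw [← Real.rpow_mul hx0.le]
    congr 1; ring
  rw [smul_eq_mul, abs_neg, abs_one, one_mul, e1, hinv]
  have e2 : 1 + x⁻¹ = (1 + x) * x⁻¹ := by field_simp; ring
  rw [e2, Real.mul_rpow hx1.le (inv_nonneg.2 hx0.le), Real.inv_rpow hx0.le]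
  have e3 : x ^ (-1-1:ℝ) * (x ^ (1 - b) * x ^ c) = x ^ (-a) := by
    rw [← Real.rpow_add hx0, ← Real.rpow_add hx0]
    congr 1; linarith
  have hxc : (0:ℝ) < x ^ c := Real.rpow_pos_of_pos hx0 c
  have hxC : (0:ℝ) < (1 + x) ^ c := Real.rpow_pos_of_pos hx1 c
  calc (1 + x) ^ (-c) * x ^ (-a)
      = x ^ (-a) / (1 + x) ^ c := by rw [Real.rpow_neg hx1.le]; ring
    _ = x ^ (-1-1:ℝ) * (x ^ (1 - b) * x ^ c) / (1 + x) ^ c := by rw [e3]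
    _ = x ^ (-1-1:ℝ) * (x ^ (1 - b) / ((1 + x) ^ c * (x ^ c)⁻¹)) := by
        field_simp

theorem stmt_4 (p q α β : ℝ) (hp : 1 < p) (hpq : 1/p + 1/q = 1)
    (hα : -1 < α) (hα' : α < p - 1) (hβ : -1 < β) (hβ' : β < p - 1)
    (m : ℕ) (hm : 1 ≤ m) :
    (∑' n : ℕ, ((m : ℝ) + (n : ℝ) + 1) ^ (-(1 + (β - α)/p)) *
        ((m : ℝ) ^ ((q - 1) * (1 - (1 + β)/p)) / ((n : ℝ) + 1) ^ ((1 + α)/p)))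
      ≤ (∫ t in Set.Ioi (0:ℝ),
            t ^ ((1 + β)/p - 1) / (1 + t) ^ ((1 + β)/p + (1 - (1 + α)/p))) *
          (m : ℝ) ^ ((1 - q) * β) := by
  have hp0 : (0:ℝ) < p := by linarith
  have hm1 : (1:ℝ) ≤ (m:ℝ) := by exact_mod_cast hm
  have hm0 : (0:ℝ) < (m:ℝ) := by linarith
  set a := (1 + α)/p with ha_def
  set b := (1 + β)/p with hb_def
  set c := 1 + (β - α)/p with hc_def
  have ha0 : 0 < a := div_pos (by linarith) hp0
  have ha1 : a < 1 := by rw [ha_def, div_lt_one hp0]; linarith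
  have hb0 : 0 < b := div_pos (by linarith) hp0
  have hb1 : b < 1 := by rw [hb_def, div_lt_one hp0]; linarith
  have hcab : c = 1 - a + b := by rw [hc_def, ha_def, hb_def]; ring
  have hc0 : 0 < c := by rw [hcab]; linarith
  have hp1 : 1/p < 1 := by rw [div_lt_one hp0]; exact hp
  have h1q : 1/q = 1 - 1/p := by linarith
  have hq0 : 0 < q := by
    have h : 0 < 1/q := by rw [h1q]; linarith
    exact one_div_pos.mp h
  have hpq2 : p + q = p * q := by
    field_simp at hpq
    linarith
  set e := (q - 1) * (1 - b) with he_def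
  have hkey : (1 - q) * β = -b + e := by
    rw [he_def, hb_def]
    field_simp
    linear_combination (1 + β) * hpq2
  have hexp : b + (1 - a) = c := by rw [hcab]; ring
  rw [hexp]
  have hterm : ∀ n : ℕ, ((m:ℝ) + (n:ℝ) + 1) ^ (-c) * ((m:ℝ) ^ e / ((n:ℝ) + 1) ^ a)
      = (m:ℝ) ^ e * (((m:ℝ) + ((n:ℝ) + 1)) ^ (-c) * ((n:ℝ) + 1) ^ (-a)) := by
    intro n
    have hn0 : (0:ℝ) < (n:ℝ) + 1 := by positivity
    rw [Real.rpow_neg hn0.le, add_assoc]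
    ring
  rw [tsum_congr hterm, tsum_mul_left]
  have hsum : (∑' n : ℕ, (((m:ℝ) + ((n:ℝ) + 1)) ^ (-c) * ((n:ℝ) + 1) ^ (-a)))
      ≤ ∫ x in Set.Ioi (0:ℝ), ((m:ℝ) + x) ^ (-c) * x ^ (-a) := by
    refine aux_sum_le (aux_integrable hm1 hc0.le ha0.le ha1 (by rw [hcab]; linarith))
      (fun x hx => ?_) (fun x y hx hxy => aux_mono hm0 hc0.le ha0.le hx hxy)
    have hx0 : (0:ℝ) < x := hx
    exact mul_nonneg (Real.rpow_nonneg (by linarith) _) (Real.rpow_nonneg hx0.le _)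
  have hBB : (∫ x in Set.Ioi (0:ℝ), ((m:ℝ) + x) ^ (-c) * x ^ (-a))
      = (m:ℝ) ^ (-b) * ∫ t in Set.Ioi (0:ℝ), t ^ (b - 1) / (1 + t) ^ c := by
    rw [aux_scale (b := b) hm0 (by linarith), aux_inv (b := b) (by linarith)]
  calc (m:ℝ) ^ e * ∑' n : ℕ, (((m:ℝ) + ((n:ℝ) + 1)) ^ (-c) * ((n:ℝ) + 1) ^ (-a))
      ≤ (m:ℝ) ^ e * ((m:ℝ) ^ (-b) * ∫ t in Set.Ioi (0:ℝ), t ^ (b - 1) / (1 + t) ^ c) :=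
        mul_le_mul_of_nonneg_left (hsum.trans_eq hBB) (Real.rpow_nonneg hm0.le e)
    _ = (∫ t in Set.Ioi (0:ℝ), t ^ (b - 1) / (1 + t) ^ c) * (m:ℝ) ^ ((1 - q) * β) := by
        rw [hkey, Real.rpow_add hm0]
        ring
end

section
/- Let p > 1, -1 < α, β < p-1, and suppose there is a constant C > 0 such that the moments of a positive Borel measure μ on [0,1) satisfy μ[n] ≤ C n^{-1-(β-α)/p} for all n ∈ ℕ. Then the operator H_μ(a)(m) = ∑_{n=1}^∞ μ[m+n] a_n is bounded from l^p_α to l^p_β: there exists C' > 0 such that (∑_{m=1}^∞ m^β |H_μ(a)(m)|^p)^{1/p} ≤ C' (∑_{n=1}^∞ n^α |a_n|^p)^{1/p} for every sequence a with ∑ n^α |a_n|^p < ∞. -/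
open MeasureTheory intervalIntegral Finset ENNReal

lemma step_le_integral {u : ℝ} (hu : u < 0) {x : ℝ} (hx : 0 < x) :
    (x+1)^u ≤ ∫ t in x..(x+1), t^u := by
  have hint : IntervalIntegrable (fun t : ℝ => t^u) volume x (x+1) := by
    apply intervalIntegral.intervalIntegrable_rpow (Or.inr ?_)
    rw [Set.uIcc_of_le (by linarith)]
    intro h
    exact absurd h.1 (by linarith)
  have hmono : ∀ t ∈ Set.Icc x (x+1), (fun _ : ℝ => (x+1)^u) t ≤ t^u := by
    intro t ht
    exact Real.rpow_le_rpow_of_nonpos (lt_of_lt_of_le hx ht.1) ht.2 hu.le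
  have := intervalIntegral.integral_mono_on (by linarith : x ≤ x + 1)
    intervalIntegrable_const hint hmono
  simpa using this

/-- Tail estimate: for u < -1, the series ∑_j (m+j+2)^u is summable with sum
  ≤ (m+1)^(u+1)/(-(u+1)). -/
lemma tail_est {u : ℝ} (hu : u < -1) (m : ℕ) :
    Summable (fun j : ℕ => ((m:ℝ)+(j:ℝ)+2)^u) ∧
    ∑' j : ℕ, ((m:ℝ)+(j:ℝ)+2)^u ≤ (-(u+1))⁻¹ * ((m:ℝ)+1)^(u+1) := by
  have hu0 : u < 0 := by linarith
  have hbound : ∀ N : ℕ, ∑ j ∈ range N, ((m:ℝ)+(j:ℝ)+2)^u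
      ≤ (-(u+1))⁻¹ * ((m:ℝ)+1)^(u+1) := by
    intro N
    have hsum_int : ∑ j ∈ range N, ((m:ℝ)+(j:ℝ)+2)^u
        ≤ ∫ t in ((m:ℝ)+1)..((m:ℝ)+1+N), t^u := by
      induction N with
      | zero => simp
      | succ n ih =>
        rw [Finset.sum_range_succ]
        have h1 : ((m:ℝ)+(n:ℝ)+2)^u ≤ ∫ t in ((m:ℝ)+1+n)..((m:ℝ)+1+n+1), t^u := by
          have := step_le_integral hu0 (x := (m:ℝ)+1+n) (by positivity)
          convert this using 2 <;> ring
        have hint : ∀ (a b : ℝ), 0 < a → a ≤ b →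
            IntervalIntegrable (fun t : ℝ => t^u) volume a b := by
          intro a b ha hab
          apply intervalIntegral.intervalIntegrable_rpow (Or.inr ?_)
          rw [Set.uIcc_of_le hab]
          intro h; exact absurd h.1 (by linarith)
        have hadd := intervalIntegral.integral_add_adjacent_intervals
          (hint ((m:ℝ)+1) ((m:ℝ)+1+n) (by positivity) (by linarith [Nat.cast_nonneg (α := ℝ) n]))
          (hint ((m:ℝ)+1+n) ((m:ℝ)+1+n+1) (by positivity) (by linarith))
          (f := fun t : ℝ => t^u)
        calc ∑ j ∈ range n, ((m:ℝ)+(j:ℝ)+2)^u + ((m:ℝ)+(n:ℝ)+2)^u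
            ≤ (∫ t in ((m:ℝ)+1)..((m:ℝ)+1+n), t^u)
              + ∫ t in ((m:ℝ)+1+n)..((m:ℝ)+1+n+1), t^u := add_le_add ih h1
          _ = ∫ t in ((m:ℝ)+1)..((m:ℝ)+1+n+1), t^u := hadd
          _ = ∫ t in ((m:ℝ)+1)..((m:ℝ)+1+(n+1:ℕ)), t^u := by push_cast; ring_nf
    refine hsum_int.trans ?_
    have hne : (0:ℝ) ∉ Set.uIcc ((m:ℝ)+1) ((m:ℝ)+1+N) := by
      rw [Set.uIcc_of_le (by linarith [Nat.cast_nonneg (α := ℝ) N])]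
      intro h; exact absurd h.1 (by push_neg; positivity)
    rw [integral_rpow (Or.inr ⟨by linarith, hne⟩)]
    have hv : u + 1 < 0 := by linarith
    set X := ((m:ℝ)+1)^(u+1) with hX
    set Y := ((m:ℝ)+1+N)^(u+1) with hY
    have hXpos : (0:ℝ) < X := Real.rpow_pos_of_pos (by positivity) _
    have hYpos : (0:ℝ) ≤ Y := (Real.rpow_pos_of_pos (by positivity) _).le
    have heq : (Y - X)/(u+1) = (X - Y) * (-(u+1))⁻¹ := by
      rw [← neg_div_neg_eq, neg_sub, div_eq_mul_inv]
    rw [heq, mul_comm ((-(u+1))⁻¹) X]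
    exact mul_le_mul_of_nonneg_right (by linarith) (inv_nonneg.mpr (by linarith))
  have hpos : ∀ j : ℕ, (0:ℝ) ≤ ((m:ℝ)+(j:ℝ)+2)^u :=
    fun j => (Real.rpow_pos_of_pos (by positivity) _).le
  exact ⟨summable_of_sum_range_le hpos hbound,
    Real.tsum_le_of_sum_range_le hpos hbound⟩

lemma step_le_integral' {t : ℝ} (ht : -1 < t) (ht0 : t < 0) (n : ℕ) :
    ((n:ℝ)+1)^t ≤ ∫ x in (n:ℝ)..((n:ℝ)+1), x^t := by
  rcases Nat.eq_zero_or_pos n with h0 | hpos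
  · subst h0
    have hne : (0:ℝ) ∉ Set.uIcc (0:ℝ) (1:ℝ) ∨ True := Or.inr trivial
    rw [integral_rpow (Or.inl ht)]
    simp only [Nat.cast_zero, zero_add]
    rw [Real.one_rpow, Real.zero_rpow (by linarith), Real.one_rpow]
    rw [le_div_iff₀ (by linarith)]
    linarith
  · have hx : (0:ℝ) < n := by exact_mod_cast hpos
    have hint : IntervalIntegrable (fun x : ℝ => x^t) volume (n:ℝ) ((n:ℝ)+1) :=
      intervalIntegral.intervalIntegrable_rpow' ht
    have hmono : ∀ x ∈ Set.Icc (n:ℝ) ((n:ℝ)+1), (fun _ : ℝ => ((n:ℝ)+1)^t) x ≤ x^t :=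
      fun x hx' => Real.rpow_le_rpow_of_nonpos (lt_of_lt_of_le hx hx'.1) hx'.2 ht0.le
    have := intervalIntegral.integral_mono_on (by linarith : (n:ℝ) ≤ (n:ℝ) + 1)
      intervalIntegrable_const hint hmono
    simpa using this

/-- Head estimate. -/
lemma head_est {t : ℝ} (ht : -1 < t) :
    ∃ c : ℝ, 0 < c ∧ ∀ m : ℕ, ∑ n ∈ range (m+1), ((n:ℝ)+1)^t ≤ c * ((m:ℝ)+1)^(t+1) := by
  rcases le_or_gt 0 t with h0 | h0
  · refine ⟨1, one_pos, fun m => ?_⟩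
    rw [one_mul]
    have hterm : ∀ n ∈ range (m+1), ((n:ℝ)+1)^t ≤ ((m:ℝ)+1)^t := by
      intro n hn
      have : (n:ℝ) + 1 ≤ (m:ℝ) + 1 := by
        have := Finset.mem_range.mp hn
        have : (n:ℝ) ≤ (m:ℝ) := by exact_mod_cast Nat.lt_succ_iff.mp ‹n < m+1›
        linarith
      exact Real.rpow_le_rpow (by positivity) this h0
    calc ∑ n ∈ range (m+1), ((n:ℝ)+1)^t ≤ ∑ _n ∈ range (m+1), ((m:ℝ)+1)^t :=
          Finset.sum_le_sum hterm
      _ = ((m+1 : ℕ) : ℝ) * ((m:ℝ)+1)^t := by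
          rw [Finset.sum_const, Finset.card_range, nsmul_eq_mul]
      _ = ((m:ℝ)+1)^(t+1) := by
          push_cast
          rw [add_comm t 1, Real.rpow_add (by positivity), Real.rpow_one]
  · refine ⟨(t+1)⁻¹, by rw [inv_pos]; linarith, fun m => ?_⟩
    have hsum_int : ∑ n ∈ range (m+1), ((n:ℝ)+1)^t ≤ ∫ x in (0:ℝ)..((m:ℝ)+1), x^t := by
      have : ∀ N : ℕ, ∑ n ∈ range N, ((n:ℝ)+1)^t ≤ ∫ x in (0:ℝ)..(N:ℝ), x^t := by
        intro N
        induction N with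
        | zero => simp
        | succ k ih =>
          rw [Finset.sum_range_succ]
          have h1 := step_le_integral' ht h0 k
          have hadd := intervalIntegral.integral_add_adjacent_intervals
            (intervalIntegral.intervalIntegrable_rpow' ht (a := 0) (b := (k:ℝ)))
            (intervalIntegral.intervalIntegrable_rpow' ht (a := (k:ℝ)) (b := (k:ℝ)+1))
            (f := fun x : ℝ => x^t)
          calc ∑ n ∈ range k, ((n:ℝ)+1)^t + ((k:ℝ)+1)^t
              ≤ (∫ x in (0:ℝ)..(k:ℝ), x^t) + ∫ x in (k:ℝ)..((k:ℝ)+1), x^t := add_le_add ih h1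
            _ = ∫ x in (0:ℝ)..((k:ℝ)+1), x^t := hadd
            _ = ∫ x in (0:ℝ)..((k+1 : ℕ):ℝ), x^t := by push_cast; ring_nf
      have := this (m+1)
      simpa using this
    refine hsum_int.trans ?_
    rw [integral_rpow (Or.inl ht)]
    rw [Real.zero_rpow (by linarith), sub_zero, div_eq_inv_mul]

/-- Key kernel estimate. -/
lemma key_est {s t : ℝ} (hs : 0 < s) (ht : -1 < t) (hts : t < s - 1) :
    ∃ c : ℝ, 0 < c ∧ ∀ m : ℕ,
      Summable (fun n : ℕ => ((m:ℝ)+(n:ℝ)+2)^(-s) * ((n:ℝ)+1)^t) ∧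
      ∑' n : ℕ, ((m:ℝ)+(n:ℝ)+2)^(-s) * ((n:ℝ)+1)^t ≤ c * ((m:ℝ)+1)^(t-s+1) := by
  obtain ⟨c₁, hc₁, hhead⟩ := head_est ht
  have hu : t - s < -1 := by linarith
  set c₂ : ℝ := (-(t-s+1))⁻¹ with hc₂def
  have hc₂ : 0 < c₂ := by rw [hc₂def, inv_pos]; linarith
  refine ⟨c₁ + c₂, by linarith, fun m => ?_⟩
  set f : ℕ → ℝ := fun n => ((m:ℝ)+(n:ℝ)+2)^(-s) * ((n:ℝ)+1)^t with hf
  have hfpos : ∀ n, 0 ≤ f n := fun n => by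
    apply mul_nonneg <;> exact (Real.rpow_pos_of_pos (by positivity) _).le
  -- pointwise domination by (n+1)^(t-s)
  have hdom : ∀ n : ℕ, f n ≤ ((n:ℝ)+1)^(t-s) := by
    intro n
    have h1 : ((m:ℝ)+(n:ℝ)+2)^(-s) ≤ ((n:ℝ)+1)^(-s) := by
      apply Real.rpow_le_rpow_of_nonpos (by positivity) (by push_cast; linarith [Nat.cast_nonneg (α := ℝ) m]) (by linarith)
    calc f n ≤ ((n:ℝ)+1)^(-s) * ((n:ℝ)+1)^t :=
          mul_le_mul_of_nonneg_right h1 (Real.rpow_pos_of_pos (by positivity) _).le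
      _ = ((n:ℝ)+1)^(t-s) := by
          rw [← Real.rpow_add (by positivity)]; ring_nf
  have hsummable : Summable f := by
    apply Summable.of_nonneg_of_le hfpos hdom
    have : Summable (fun n : ℕ => ((n:ℝ))^(t-s)) := Real.summable_nat_rpow.mpr (by linarith)
    have h2 := (summable_nat_add_iff 1).mpr this
    apply h2.congr
    intro n; push_cast; ring_nf
  refine ⟨hsummable, ?_⟩
  -- split the sum
  rw [← Summable.sum_add_tsum_nat_add (m+1) hsummable]
  have hhead' : ∑ n ∈ range (m+1), f n ≤ c₁ * ((m:ℝ)+1)^(t-s+1) := by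
    have hterm : ∀ n ∈ range (m+1), f n ≤ ((m:ℝ)+1)^(-s) * ((n:ℝ)+1)^t := by
      intro n hn
      apply mul_le_mul_of_nonneg_right ?_ (Real.rpow_pos_of_pos (by positivity) _).le
      apply Real.rpow_le_rpow_of_nonpos (by positivity) (by linarith [Nat.cast_nonneg (α := ℝ) n]) (by linarith)
    calc ∑ n ∈ range (m+1), f n ≤ ∑ n ∈ range (m+1), ((m:ℝ)+1)^(-s) * ((n:ℝ)+1)^t :=
          Finset.sum_le_sum hterm
      _ = ((m:ℝ)+1)^(-s) * ∑ n ∈ range (m+1), ((n:ℝ)+1)^t := by rw [Finset.mul_sum]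
      _ ≤ ((m:ℝ)+1)^(-s) * (c₁ * ((m:ℝ)+1)^(t+1)) :=
          mul_le_mul_of_nonneg_left (hhead m) (Real.rpow_pos_of_pos (by positivity) _).le
      _ = c₁ * ((m:ℝ)+1)^(t-s+1) := by
          rw [← mul_assoc, mul_comm (((m:ℝ)+1)^(-s)) c₁, mul_assoc,
            ← Real.rpow_add (by positivity)]
          ring_nf
  have htail' : ∑' n : ℕ, f (n + (m+1)) ≤ c₂ * ((m:ℝ)+1)^(t-s+1) := by
    obtain ⟨hts_summ, hts_bound⟩ := tail_est hu m
    have hptwise : ∀ n : ℕ, f (n + (m+1)) ≤ ((m:ℝ)+(n:ℝ)+2)^(t-s) := by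
      intro n
      have hc : ((n + (m+1) : ℕ) : ℝ) = (n:ℝ) + (m:ℝ) + 1 := by push_cast; ring
      have hb : (0:ℝ) < (m:ℝ)+(n:ℝ)+2 := by positivity
      rw [hf]
      simp only [hc]
      have h1 : ((m:ℝ)+((n:ℝ)+(m:ℝ)+1)+2)^(-s) ≤ ((m:ℝ)+(n:ℝ)+2)^(-s) := by
        apply Real.rpow_le_rpow_of_nonpos hb (by linarith [Nat.cast_nonneg (α := ℝ) m]) (by linarith)
      have h2 : ((n:ℝ)+(m:ℝ)+1+1)^t = ((m:ℝ)+(n:ℝ)+2)^t := by ring_nf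
      calc ((m:ℝ)+((n:ℝ)+(m:ℝ)+1)+2)^(-s) * ((n:ℝ)+(m:ℝ)+1+1)^t
          ≤ ((m:ℝ)+(n:ℝ)+2)^(-s) * ((n:ℝ)+(m:ℝ)+1+1)^t :=
            mul_le_mul_of_nonneg_right h1 (Real.rpow_pos_of_pos (by positivity) _).le
        _ = ((m:ℝ)+(n:ℝ)+2)^(t-s) := by
            rw [h2, ← Real.rpow_add hb]; ring_nf
    calc ∑' n : ℕ, f (n + (m+1)) ≤ ∑' n : ℕ, ((m:ℝ)+(n:ℝ)+2)^(t-s) :=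
          Summable.tsum_le_tsum hptwise ((summable_nat_add_iff (m+1)).mpr hsummable) hts_summ
      _ ≤ (-(t-s+1))⁻¹ * ((m:ℝ)+1)^(t-s+1) := hts_bound
      _ = c₂ * ((m:ℝ)+1)^(t-s+1) := by rw [hc₂def]
  calc ∑ n ∈ range (m+1), f n + ∑' n : ℕ, f (n + (m+1))
      ≤ c₁ * ((m:ℝ)+1)^(t-s+1) + c₂ * ((m:ℝ)+1)^(t-s+1) := add_le_add hhead' htail'
    _ = (c₁ + c₂) * ((m:ℝ)+1)^(t-s+1) := by ring

lemma holder_tsum (f g : ℕ → ℝ≥0∞) {p q : ℝ} (hpq : p.HolderConjugate q) :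
    ∑' i, f i * g i ≤ (∑' i, f i ^ p) ^ (1/p) * (∑' i, g i ^ q) ^ (1/q) := by
  rw [ENNReal.tsum_eq_iSup_sum]
  refine iSup_le fun s => ?_
  refine (ENNReal.inner_le_Lp_mul_Lq s f g hpq).trans (mul_le_mul' ?_ ?_)
  · exact ENNReal.rpow_le_rpow (ENNReal.sum_le_tsum s) hpq.one_div_nonneg
  · exact ENNReal.rpow_le_rpow (ENNReal.sum_le_tsum s) hpq.symm.one_div_nonneg

lemma key_est_ennreal {s t : ℝ} (hs : 0 < s) (ht : -1 < t) (hts : t < s - 1) :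
    ∃ c : ℝ, 0 < c ∧ ∀ m : ℕ,
      ∑' n : ℕ, ENNReal.ofReal (((m:ℝ)+(n:ℝ)+2)^(-s) * ((n:ℝ)+1)^t)
        ≤ ENNReal.ofReal (c * ((m:ℝ)+1)^(t-s+1)) := by
  obtain ⟨c, hc, h⟩ := key_est hs ht hts
  refine ⟨c, hc, fun m => ?_⟩
  obtain ⟨hsumm, hbound⟩ := h m
  rw [← ENNReal.ofReal_tsum_of_nonneg (fun n => by positivity) hsumm]
  exact ENNReal.ofReal_le_ofReal hbound

set_option maxHeartbeats 2000000 in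
theorem stmt_5 (p α β : ℝ) (hp : 1 < p)
    (hα : -1 < α) (hα' : α < p - 1) (hβ : -1 < β) (hβ' : β < p - 1)
    (μ : Measure ℝ) [IsFiniteMeasure μ] (C : ℝ) (hC : 0 < C)
    (hmom : ∀ n : ℕ, 1 ≤ n →
      ∫ t in Set.Ico (0:ℝ) 1, t ^ (n - 1) ∂μ ≤ C * (n : ℝ) ^ (-1 - (β - α)/p)) :
    ∃ C' : ℝ, 0 < C' ∧ ∀ a : ℕ → ℝ,
      Summable (fun n : ℕ => ((n : ℝ) + 1) ^ α * |a n| ^ p) →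
      (∑' m : ℕ, ((m : ℝ) + 1) ^ β *
          |∑' n : ℕ, (∫ t in Set.Ico (0:ℝ) 1, t ^ (m + n + 1) ∂μ) * a n| ^ p) ^ (1/p)
        ≤ C' * (∑' n : ℕ, ((n : ℝ) + 1) ^ α * |a n| ^ p) ^ (1/p) := by
  have hp0 : (0:ℝ) < p := by linarith
  have hp1 : p - 1 ≠ 0 := by intro h; linarith [sub_eq_zero.mp h]
  set q : ℝ := p/(p-1) with hq_def
  have hpq : p.HolderConjugate q := Real.HolderConjugate.conjExponent hp
  have hq0 : (0:ℝ) < q := hpq.symm.pos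
  set s : ℝ := 1 + (β-α)/p with hs_def
  have hs : 0 < s := by
    have h1 : -1 < (β-α)/p := by rw [lt_div_iff₀ hp0]; linarith
    rw [hs_def]; linarith
  set δ : ℝ := -(1+α)/p with hδ_def
  have hδ1 : -1 < δ := by
    rw [hδ_def, lt_div_iff₀ hp0]; linarith
  have hδ2 : δ < s - 1 := by
    rw [hδ_def, hs_def]
    have h1 : (-(1+α)/p - (β-α)/p) * p = -(1+β) := by field_simp; ring
    nlinarith [hp0, hβ]
  set γ : ℝ := δ/q with hγ_def
  set e : ℝ := β + (δ-s+1)*(p-1) with he_def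
  have he_alt : e = (1+β)/p - 1 := by
    rw [he_def, hδ_def, hs_def]; field_simp; ring
  have he1 : -1 < e := by
    rw [he_alt]
    have : 0 < (1+β)/p := div_pos (by linarith) hp0
    linarith
  have he2 : e < s - 1 := by
    rw [he_alt, hs_def]
    have h1 : ((1+β)/p - 1 - (β-α)/p) * p = α + 1 - p := by field_simp; ring
    nlinarith [hp0, hα']
  have hγq : γ * q = δ := div_mul_cancel₀ δ hq0.ne'
  have hγp : γ * p = -(1+α)*(p-1)/p := by
    rw [hγ_def, hδ_def, hq_def]; field_simp
  have hfinal : e - s + 1 - γ*p = α := by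
    rw [he_def, hγp, hδ_def, hs_def]; field_simp; ring
  have hpq_split : (-s)/q + (-s)/p = -s := by
    rw [div_eq_mul_inv, div_eq_mul_inv, ← mul_add, add_comm q⁻¹ p⁻¹,
      hpq.inv_add_inv_eq_one, mul_one]
  have hpdivq : p/q = p - 1 := by rw [hq_def]; field_simp
  have hαcomp : -s - γ*p ≤ α := by
    rw [hγp, hs_def]
    have h1 : (-(1 + (β-α)/p) - -(1+α)*(p-1)/p - α) * p = -(1+β) := by field_simp; ring
    nlinarith [hp0, hβ]
  obtain ⟨c₁, hc₁, hkey₁⟩ := key_est_ennreal hs hδ1 hδ2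
  obtain ⟨c₂, hc₂, hkey₂⟩ := key_est_ennreal hs he1 he2
  set K : ℝ := c₁^(p-1) * c₂ with hK_def
  have hK : 0 < K := mul_pos (Real.rpow_pos_of_pos hc₁ _) hc₂
  refine ⟨(C^p * K)^(1/p), Real.rpow_pos_of_pos (by positivity) _, ?_⟩
  intro a ha
  set A : ℝ := ∑' n : ℕ, ((n:ℝ)+1)^α * |a n|^p with hA_def
  have hA0 : 0 ≤ A := tsum_nonneg (fun n => by positivity)
  have hG : ∑' n : ℕ, ENNReal.ofReal (((n:ℝ)+1)^α * |a n|^p) = ENNReal.ofReal A := by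
    rw [hA_def, ENNReal.ofReal_tsum_of_nonneg (fun n => by positivity) ha]
  have hbase : ∀ m n : ℕ, (0:ℝ) < (m:ℝ)+(n:ℝ)+2 := fun m n => by positivity
  have hn1 : ∀ n : ℕ, (0:ℝ) < (n:ℝ)+1 := fun n => by positivity
  -- Hölder factors
  have hmul : ∀ m n : ℕ,
      ENNReal.ofReal (((m:ℝ)+(n:ℝ)+2)^(-s/q) * ((n:ℝ)+1)^γ) *
      ENNReal.ofReal (((m:ℝ)+(n:ℝ)+2)^(-s/p) * (((n:ℝ)+1)^(-γ) * |a n|))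
      = ENNReal.ofReal (((m:ℝ)+(n:ℝ)+2)^(-s) * |a n|) := by
    intro m n
    rw [← ENNReal.ofReal_mul (by positivity)]
    congr 1
    have h1 : ((m:ℝ)+(n:ℝ)+2)^(-s/q) * ((m:ℝ)+(n:ℝ)+2)^(-s/p) = ((m:ℝ)+(n:ℝ)+2)^(-s) := by
      rw [← Real.rpow_add (hbase m n), hpq_split]
    have h2 : ((n:ℝ)+1)^γ * ((n:ℝ)+1)^(-γ) = 1 := by
      rw [← Real.rpow_add (hn1 n), add_neg_cancel, Real.rpow_zero]
    calc ((m:ℝ)+(n:ℝ)+2)^(-s/q) * ((n:ℝ)+1)^γ *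
          (((m:ℝ)+(n:ℝ)+2)^(-s/p) * (((n:ℝ)+1)^(-γ) * |a n|))
        = (((m:ℝ)+(n:ℝ)+2)^(-s/q) * ((m:ℝ)+(n:ℝ)+2)^(-s/p)) *
          (((n:ℝ)+1)^γ * ((n:ℝ)+1)^(-γ)) * |a n| := by ring
      _ = ((m:ℝ)+(n:ℝ)+2)^(-s) * |a n| := by rw [h1, h2, mul_one]
  have hF₁q : ∀ m n : ℕ,
      ENNReal.ofReal (((m:ℝ)+(n:ℝ)+2)^(-s/q) * ((n:ℝ)+1)^γ) ^ q
      = ENNReal.ofReal (((m:ℝ)+(n:ℝ)+2)^(-s) * ((n:ℝ)+1)^δ) := by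
    intro m n
    rw [ENNReal.ofReal_rpow_of_nonneg (by positivity) hq0.le]
    congr 1
    rw [Real.mul_rpow (by positivity) (by positivity),
      ← Real.rpow_mul (hbase m n).le, ← Real.rpow_mul (hn1 n).le,
      div_mul_cancel₀ _ hq0.ne', hγq]
  have hF₂p : ∀ m n : ℕ,
      ENNReal.ofReal (((m:ℝ)+(n:ℝ)+2)^(-s/p) * (((n:ℝ)+1)^(-γ) * |a n|)) ^ p
      = ENNReal.ofReal (((m:ℝ)+(n:ℝ)+2)^(-s) * (((n:ℝ)+1)^(-(γ*p)) * |a n|^p)) := by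
    intro m n
    rw [ENNReal.ofReal_rpow_of_nonneg (by positivity) hp0.le]
    congr 1
    rw [Real.mul_rpow (by positivity) (by positivity),
      Real.mul_rpow (by positivity) (abs_nonneg _),
      ← Real.rpow_mul (hbase m n).le, ← Real.rpow_mul (hn1 n).le,
      div_mul_cancel₀ _ hp0.ne', neg_mul]
  have hF₂G : ∀ m n : ℕ,
      ENNReal.ofReal (((m:ℝ)+(n:ℝ)+2)^(-s) * (((n:ℝ)+1)^(-(γ*p)) * |a n|^p))
      ≤ ENNReal.ofReal (((n:ℝ)+1)^α * |a n|^p) := by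
    intro m n
    apply ENNReal.ofReal_le_ofReal
    have h1 : ((m:ℝ)+(n:ℝ)+2)^(-s) ≤ ((n:ℝ)+1)^(-s) :=
      Real.rpow_le_rpow_of_nonpos (hn1 n) (by linarith [Nat.cast_nonneg (α := ℝ) m]) (by linarith)
    have h2 : ((n:ℝ)+1)^(-s) * ((n:ℝ)+1)^(-(γ*p)) ≤ ((n:ℝ)+1)^α := by
      rw [← Real.rpow_add (hn1 n)]
      apply Real.rpow_le_rpow_of_exponent_le (by linarith [Nat.cast_nonneg (α := ℝ) n])
      linarith [hαcomp]
    calc ((m:ℝ)+(n:ℝ)+2)^(-s) * (((n:ℝ)+1)^(-(γ*p)) * |a n|^p)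
        ≤ ((n:ℝ)+1)^(-s) * (((n:ℝ)+1)^(-(γ*p)) * |a n|^p) := by
          apply mul_le_mul_of_nonneg_right h1 (by positivity)
      _ = (((n:ℝ)+1)^(-s) * ((n:ℝ)+1)^(-(γ*p))) * |a n|^p := by ring
      _ ≤ ((n:ℝ)+1)^α * |a n|^p := mul_le_mul_of_nonneg_right h2 (by positivity)
  have hF₂sum : ∀ m : ℕ,
      ∑' n : ℕ, ENNReal.ofReal (((m:ℝ)+(n:ℝ)+2)^(-s/p) * (((n:ℝ)+1)^(-γ) * |a n|)) ^ p
      ≤ ENNReal.ofReal A := by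
    intro m
    calc ∑' n : ℕ, ENNReal.ofReal (((m:ℝ)+(n:ℝ)+2)^(-s/p) * (((n:ℝ)+1)^(-γ) * |a n|)) ^ p
        = ∑' n : ℕ, ENNReal.ofReal (((m:ℝ)+(n:ℝ)+2)^(-s) * (((n:ℝ)+1)^(-(γ*p)) * |a n|^p)) := by
          exact tsum_congr (fun n => hF₂p m n)
      _ ≤ ∑' n : ℕ, ENNReal.ofReal (((n:ℝ)+1)^α * |a n|^p) :=
          Summable.tsum_le_tsum (fun n => hF₂G m n) ENNReal.summable ENNReal.summable
      _ = ENNReal.ofReal A := hG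
  have hHolder : ∀ m : ℕ,
      ∑' n : ℕ, ENNReal.ofReal (((m:ℝ)+(n:ℝ)+2)^(-s) * |a n|)
      ≤ ENNReal.ofReal (c₁ * ((m:ℝ)+1)^(δ-s+1)) ^ (1/q) *
        (∑' n : ℕ, ENNReal.ofReal (((m:ℝ)+(n:ℝ)+2)^(-s/p) * (((n:ℝ)+1)^(-γ) * |a n|)) ^ p) ^ (1/p) := by
    intro m
    calc ∑' n : ℕ, ENNReal.ofReal (((m:ℝ)+(n:ℝ)+2)^(-s) * |a n|)
        = ∑' n : ℕ, ENNReal.ofReal (((m:ℝ)+(n:ℝ)+2)^(-s/q) * ((n:ℝ)+1)^γ) *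
            ENNReal.ofReal (((m:ℝ)+(n:ℝ)+2)^(-s/p) * (((n:ℝ)+1)^(-γ) * |a n|)) :=
          (tsum_congr (fun n => hmul m n)).symm
      _ ≤ (∑' n : ℕ, ENNReal.ofReal (((m:ℝ)+(n:ℝ)+2)^(-s/q) * ((n:ℝ)+1)^γ) ^ q) ^ (1/q) *
          (∑' n : ℕ, ENNReal.ofReal (((m:ℝ)+(n:ℝ)+2)^(-s/p) * (((n:ℝ)+1)^(-γ) * |a n|)) ^ p) ^ (1/p) :=
          holder_tsum _ _ hpq.symm
      _ ≤ ENNReal.ofReal (c₁ * ((m:ℝ)+1)^(δ-s+1)) ^ (1/q) *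
          (∑' n : ℕ, ENNReal.ofReal (((m:ℝ)+(n:ℝ)+2)^(-s/p) * (((n:ℝ)+1)^(-γ) * |a n|)) ^ p) ^ (1/p) := by
          apply mul_le_mul_left
          apply ENNReal.rpow_le_rpow ?_ (by positivity)
          calc ∑' n : ℕ, ENNReal.ofReal (((m:ℝ)+(n:ℝ)+2)^(-s/q) * ((n:ℝ)+1)^γ) ^ q
              = ∑' n : ℕ, ENNReal.ofReal (((m:ℝ)+(n:ℝ)+2)^(-s) * ((n:ℝ)+1)^δ) :=
                tsum_congr (fun n => hF₁q m n)
            _ ≤ ENNReal.ofReal (c₁ * ((m:ℝ)+1)^(δ-s+1)) := hkey₁ m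
  have hSfin : ∀ m : ℕ, ∑' n : ℕ, ENNReal.ofReal (((m:ℝ)+(n:ℝ)+2)^(-s) * |a n|) ≠ ⊤ := by
    intro m
    apply ne_top_of_le_ne_top ?_ (hHolder m)
    apply ENNReal.mul_ne_top
    · exact ENNReal.rpow_ne_top_of_nonneg (by positivity) ENNReal.ofReal_ne_top
    · apply ENNReal.rpow_ne_top_of_nonneg (by positivity)
      exact ne_top_of_le_ne_top ENNReal.ofReal_ne_top (hF₂sum m)
  -- weighted p-th power bound for each m
  have hSp : ∀ m : ℕ,
      ENNReal.ofReal (((m:ℝ)+1)^β) * (∑' n : ℕ, ENNReal.ofReal (((m:ℝ)+(n:ℝ)+2)^(-s) * |a n|)) ^ p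
      ≤ ENNReal.ofReal (c₁^(p-1) * ((m:ℝ)+1)^e) *
        ∑' n : ℕ, ENNReal.ofReal (((m:ℝ)+(n:ℝ)+2)^(-s) * (((n:ℝ)+1)^(-(γ*p)) * |a n|^p)) := by
    intro m
    have hm1 : (0:ℝ) < (m:ℝ)+1 := by positivity
    have step1 : (∑' n : ℕ, ENNReal.ofReal (((m:ℝ)+(n:ℝ)+2)^(-s) * |a n|)) ^ p
        ≤ (ENNReal.ofReal (c₁ * ((m:ℝ)+1)^(δ-s+1)) ^ (1/q)) ^ p *
          ((∑' n : ℕ, ENNReal.ofReal (((m:ℝ)+(n:ℝ)+2)^(-s/p) * (((n:ℝ)+1)^(-γ) * |a n|)) ^ p) ^ (1/p)) ^ p := by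
      rw [← ENNReal.mul_rpow_of_nonneg _ _ hp0.le]
      exact ENNReal.rpow_le_rpow (hHolder m) hp0.le
    have step2 : ((∑' n : ℕ, ENNReal.ofReal (((m:ℝ)+(n:ℝ)+2)^(-s/p) * (((n:ℝ)+1)^(-γ) * |a n|)) ^ p) ^ (1/p)) ^ p
        = ∑' n : ℕ, ENNReal.ofReal (((m:ℝ)+(n:ℝ)+2)^(-s) * (((n:ℝ)+1)^(-(γ*p)) * |a n|^p)) := by
      rw [← ENNReal.rpow_mul, one_div, inv_mul_cancel₀ hp0.ne', ENNReal.rpow_one]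
      exact tsum_congr (fun n => hF₂p m n)
    have step3 : (ENNReal.ofReal (c₁ * ((m:ℝ)+1)^(δ-s+1)) ^ (1/q)) ^ p
        = ENNReal.ofReal (c₁^(p-1) * ((m:ℝ)+1)^((δ-s+1)*(p-1))) := by
      rw [← ENNReal.rpow_mul]
      have hexp : 1/q * p = p - 1 := by
        rw [one_div, ← div_eq_inv_mul, hpdivq]
      rw [hexp, ENNReal.ofReal_rpow_of_nonneg (by positivity) (by linarith)]
      congr 1
      rw [Real.mul_rpow hc₁.le (by positivity), ← Real.rpow_mul hm1.le]
    calc ENNReal.ofReal (((m:ℝ)+1)^β) *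
          (∑' n : ℕ, ENNReal.ofReal (((m:ℝ)+(n:ℝ)+2)^(-s) * |a n|)) ^ p
        ≤ ENNReal.ofReal (((m:ℝ)+1)^β) *
          (ENNReal.ofReal (c₁^(p-1) * ((m:ℝ)+1)^((δ-s+1)*(p-1))) *
           ∑' n : ℕ, ENNReal.ofReal (((m:ℝ)+(n:ℝ)+2)^(-s) * (((n:ℝ)+1)^(-(γ*p)) * |a n|^p))) := by
          apply mul_le_mul_right
          calc (∑' n : ℕ, ENNReal.ofReal (((m:ℝ)+(n:ℝ)+2)^(-s) * |a n|)) ^ p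
              ≤ _ := step1
            _ = ENNReal.ofReal (c₁^(p-1) * ((m:ℝ)+1)^((δ-s+1)*(p-1))) *
                ∑' n : ℕ, ENNReal.ofReal (((m:ℝ)+(n:ℝ)+2)^(-s) * (((n:ℝ)+1)^(-(γ*p)) * |a n|^p)) := by
                rw [step2, step3]
      _ = ENNReal.ofReal (c₁^(p-1) * ((m:ℝ)+1)^e) *
          ∑' n : ℕ, ENNReal.ofReal (((m:ℝ)+(n:ℝ)+2)^(-s) * (((n:ℝ)+1)^(-(γ*p)) * |a n|^p)) := by
          rw [← mul_assoc, ← ENNReal.ofReal_mul (by positivity)]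
          congr 2
          rw [he_def]
          rw [show ((m:ℝ)+1)^β * (c₁^(p-1) * ((m:ℝ)+1)^((δ-s+1)*(p-1)))
            = c₁^(p-1) * (((m:ℝ)+1)^β * ((m:ℝ)+1)^((δ-s+1)*(p-1))) from by ring,
            ← Real.rpow_add hm1]
  -- master bound
  have hU : ∑' m : ℕ, ENNReal.ofReal (((m:ℝ)+1)^β) *
        (∑' n : ℕ, ENNReal.ofReal (((m:ℝ)+(n:ℝ)+2)^(-s) * |a n|)) ^ p
      ≤ ENNReal.ofReal (K * A) := by
    have hswap : ∑' m : ℕ, ∑' n : ℕ, (ENNReal.ofReal (c₁^(p-1)) *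
          (ENNReal.ofReal (((n:ℝ)+(m:ℝ)+2)^(-s) * ((m:ℝ)+1)^e) *
           ENNReal.ofReal (((n:ℝ)+1)^(-(γ*p)) * |a n|^p)))
        = ∑' n : ℕ, ∑' m : ℕ, (ENNReal.ofReal (c₁^(p-1)) *
          (ENNReal.ofReal (((n:ℝ)+(m:ℝ)+2)^(-s) * ((m:ℝ)+1)^e) *
           ENNReal.ofReal (((n:ℝ)+1)^(-(γ*p)) * |a n|^p))) := ENNReal.tsum_comm
    have hinner : ∀ n : ℕ, ∑' m : ℕ, (ENNReal.ofReal (c₁^(p-1)) *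
          (ENNReal.ofReal (((n:ℝ)+(m:ℝ)+2)^(-s) * ((m:ℝ)+1)^e) *
           ENNReal.ofReal (((n:ℝ)+1)^(-(γ*p)) * |a n|^p)))
        ≤ ENNReal.ofReal (K * (((n:ℝ)+1)^α * |a n|^p)) := by
      intro n
      have h2 : ((n:ℝ)+1)^(e-s+1) * ((n:ℝ)+1)^(-(γ*p)) = ((n:ℝ)+1)^α := by
        rw [← Real.rpow_add (hn1 n), show e - s + 1 + -(γ*p) = α from by linarith [hfinal]]
      calc ∑' m : ℕ, (ENNReal.ofReal (c₁^(p-1)) *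
            (ENNReal.ofReal (((n:ℝ)+(m:ℝ)+2)^(-s) * ((m:ℝ)+1)^e) *
             ENNReal.ofReal (((n:ℝ)+1)^(-(γ*p)) * |a n|^p)))
          = ENNReal.ofReal (c₁^(p-1)) *
            ((∑' m : ℕ, ENNReal.ofReal (((n:ℝ)+(m:ℝ)+2)^(-s) * ((m:ℝ)+1)^e)) *
             ENNReal.ofReal (((n:ℝ)+1)^(-(γ*p)) * |a n|^p)) := by
            rw [ENNReal.tsum_mul_left, ENNReal.tsum_mul_right]
        _ ≤ ENNReal.ofReal (c₁^(p-1)) *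
            (ENNReal.ofReal (c₂ * ((n:ℝ)+1)^(e-s+1)) *
             ENNReal.ofReal (((n:ℝ)+1)^(-(γ*p)) * |a n|^p)) :=
            mul_le_mul_right (mul_le_mul_left (hkey₂ n) _) _
        _ = ENNReal.ofReal (K * (((n:ℝ)+1)^α * |a n|^p)) := by
            rw [← ENNReal.ofReal_mul (by positivity), ← ENNReal.ofReal_mul (by positivity)]
            congr 1
            calc c₁^(p-1) * (c₂ * ((n:ℝ)+1)^(e-s+1) * (((n:ℝ)+1)^(-(γ*p)) * |a n|^p))
                = (c₁^(p-1) * c₂) * ((((n:ℝ)+1)^(e-s+1) * ((n:ℝ)+1)^(-(γ*p))) * |a n|^p) := by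
                  ring
              _ = K * (((n:ℝ)+1)^α * |a n|^p) := by rw [h2, hK_def]
    calc ∑' m : ℕ, ENNReal.ofReal (((m:ℝ)+1)^β) *
          (∑' n : ℕ, ENNReal.ofReal (((m:ℝ)+(n:ℝ)+2)^(-s) * |a n|)) ^ p
        ≤ ∑' m : ℕ, ENNReal.ofReal (c₁^(p-1) * ((m:ℝ)+1)^e) *
          ∑' n : ℕ, ENNReal.ofReal (((m:ℝ)+(n:ℝ)+2)^(-s) * (((n:ℝ)+1)^(-(γ*p)) * |a n|^p)) :=
          Summable.tsum_le_tsum hSp ENNReal.summable ENNReal.summable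
      _ = ∑' m : ℕ, ∑' n : ℕ, (ENNReal.ofReal (c₁^(p-1)) *
            (ENNReal.ofReal (((n:ℝ)+(m:ℝ)+2)^(-s) * ((m:ℝ)+1)^e) *
             ENNReal.ofReal (((n:ℝ)+1)^(-(γ*p)) * |a n|^p))) := by
          apply tsum_congr; intro m
          rw [← ENNReal.tsum_mul_left]
          apply tsum_congr; intro n
          rw [← ENNReal.ofReal_mul (by positivity), ← ENNReal.ofReal_mul (by positivity),
            ← ENNReal.ofReal_mul (by positivity)]
          congr 1
          rw [show (m:ℝ)+(n:ℝ)+2 = (n:ℝ)+(m:ℝ)+2 from by ring]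
          ring
      _ = ∑' n : ℕ, ∑' m : ℕ, (ENNReal.ofReal (c₁^(p-1)) *
            (ENNReal.ofReal (((n:ℝ)+(m:ℝ)+2)^(-s) * ((m:ℝ)+1)^e) *
             ENNReal.ofReal (((n:ℝ)+1)^(-(γ*p)) * |a n|^p))) := hswap
      _ ≤ ∑' n : ℕ, ENNReal.ofReal (K * (((n:ℝ)+1)^α * |a n|^p)) :=
          Summable.tsum_le_tsum hinner ENNReal.summable ENNReal.summable
      _ = ENNReal.ofReal K * ∑' n : ℕ, ENNReal.ofReal (((n:ℝ)+1)^α * |a n|^p) := by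
          rw [← ENNReal.tsum_mul_left]
          exact tsum_congr (fun n => ENNReal.ofReal_mul hK.le)
      _ = ENNReal.ofReal (K * A) := by rw [hG, ← ENNReal.ofReal_mul hK.le]
  -- moment bounds
  have hμpos : ∀ m n : ℕ, 0 ≤ ∫ t in Set.Ico (0:ℝ) 1, t ^ (m + n + 1) ∂μ := by
    intro m n
    apply setIntegral_nonneg measurableSet_Ico
    intro t ht
    exact pow_nonneg ht.1 _
  have hμle : ∀ m n : ℕ, (∫ t in Set.Ico (0:ℝ) 1, t ^ (m + n + 1) ∂μ)
      ≤ C * ((m:ℝ)+(n:ℝ)+2)^(-s) := by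
    intro m n
    have h := hmom (m+n+2) (by omega)
    have h1 : m+n+2 - 1 = m + n + 1 := by omega
    rw [h1] at h
    have h2 : ((m+n+2 : ℕ):ℝ) = (m:ℝ)+(n:ℝ)+2 := by push_cast; ring
    have h3 : -1-(β-α)/p = -s := by rw [hs_def]; ring
    rw [h2, h3] at h
    exact h
  -- real-side summability
  have hw : ∀ m : ℕ, Summable (fun n : ℕ => ((m:ℝ)+(n:ℝ)+2)^(-s) * |a n|) := by
    intro m
    have h1 := ENNReal.summable_toReal (hSfin m)
    apply h1.congr
    intro n
    rw [ENNReal.toReal_ofReal (by positivity)]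
  have hwsum : ∀ m : ℕ, ∑' n : ℕ, ((m:ℝ)+(n:ℝ)+2)^(-s) * |a n|
      = (∑' n : ℕ, ENNReal.ofReal (((m:ℝ)+(n:ℝ)+2)^(-s) * |a n|)).toReal := by
    intro m
    rw [← ENNReal.ofReal_tsum_of_nonneg (fun n => by positivity) (hw m),
      ENNReal.toReal_ofReal (tsum_nonneg (fun n => by positivity))]
  have hTm : ∀ m : ℕ, |∑' n : ℕ, (∫ t in Set.Ico (0:ℝ) 1, t ^ (m + n + 1) ∂μ) * a n|
      ≤ C * (∑' n : ℕ, ENNReal.ofReal (((m:ℝ)+(n:ℝ)+2)^(-s) * |a n|)).toReal := by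
    intro m
    have habs : ∀ n : ℕ, |(∫ t in Set.Ico (0:ℝ) 1, t ^ (m + n + 1) ∂μ) * a n|
        ≤ C * (((m:ℝ)+(n:ℝ)+2)^(-s) * |a n|) := by
      intro n
      rw [abs_mul, abs_of_nonneg (hμpos m n)]
      calc (∫ t in Set.Ico (0:ℝ) 1, t ^ (m + n + 1) ∂μ) * |a n|
          ≤ (C * ((m:ℝ)+(n:ℝ)+2)^(-s)) * |a n| :=
            mul_le_mul_of_nonneg_right (hμle m n) (abs_nonneg _)
        _ = C * (((m:ℝ)+(n:ℝ)+2)^(-s) * |a n|) := by ring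
    have hsumm_abs : Summable (fun n : ℕ =>
        |(∫ t in Set.Ico (0:ℝ) 1, t ^ (m + n + 1) ∂μ) * a n|) :=
      Summable.of_nonneg_of_le (fun n => abs_nonneg _) habs ((hw m).mul_left C)
    have h0 : ‖∑' n : ℕ, (∫ t in Set.Ico (0:ℝ) 1, t ^ (m + n + 1) ∂μ) * a n‖
        ≤ ∑' n : ℕ, ‖(∫ t in Set.Ico (0:ℝ) 1, t ^ (m + n + 1) ∂μ) * a n‖ :=
      norm_tsum_le_tsum_norm (by simpa only [Real.norm_eq_abs] using hsumm_abs)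
    simp only [Real.norm_eq_abs] at h0
    calc |∑' n : ℕ, (∫ t in Set.Ico (0:ℝ) 1, t ^ (m + n + 1) ∂μ) * a n|
        ≤ ∑' n : ℕ, |(∫ t in Set.Ico (0:ℝ) 1, t ^ (m + n + 1) ∂μ) * a n| := h0
      _ ≤ ∑' n : ℕ, C * (((m:ℝ)+(n:ℝ)+2)^(-s) * |a n|) :=
          Summable.tsum_le_tsum habs hsumm_abs ((hw m).mul_left C)
      _ = C * ∑' n : ℕ, ((m:ℝ)+(n:ℝ)+2)^(-s) * |a n| := tsum_mul_left
      _ = C * (∑' n : ℕ, ENNReal.ofReal (((m:ℝ)+(n:ℝ)+2)^(-s) * |a n|)).toReal := by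
          rw [hwsum m]
  -- finiteness
  have hUfin : (∑' m : ℕ, ENNReal.ofReal (((m:ℝ)+1)^β) *
      (∑' n : ℕ, ENNReal.ofReal (((m:ℝ)+(n:ℝ)+2)^(-s) * |a n|)) ^ p) ≠ ⊤ :=
    ne_top_of_le_ne_top ENNReal.ofReal_ne_top hU
  have hYfin : ∀ m : ℕ, ENNReal.ofReal (((m:ℝ)+1)^β) *
      (∑' n : ℕ, ENNReal.ofReal (((m:ℝ)+(n:ℝ)+2)^(-s) * |a n|)) ^ p ≠ ⊤ := fun m =>
    ENNReal.mul_ne_top ENNReal.ofReal_ne_top (ENNReal.rpow_ne_top_of_nonneg hp0.le (hSfin m))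
  have hYsum : Summable (fun m : ℕ => (ENNReal.ofReal (((m:ℝ)+1)^β) *
      (∑' n : ℕ, ENNReal.ofReal (((m:ℝ)+(n:ℝ)+2)^(-s) * |a n|)) ^ p).toReal) :=
    ENNReal.summable_toReal hUfin
  have hLY : ∀ m : ℕ, ((m:ℝ)+1)^β *
      |∑' n : ℕ, (∫ t in Set.Ico (0:ℝ) 1, t ^ (m + n + 1) ∂μ) * a n| ^ p
      ≤ C^p * (ENNReal.ofReal (((m:ℝ)+1)^β) *
        (∑' n : ℕ, ENNReal.ofReal (((m:ℝ)+(n:ℝ)+2)^(-s) * |a n|)) ^ p).toReal := by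
    intro m
    have hYval : (ENNReal.ofReal (((m:ℝ)+1)^β) *
        (∑' n : ℕ, ENNReal.ofReal (((m:ℝ)+(n:ℝ)+2)^(-s) * |a n|)) ^ p).toReal
        = ((m:ℝ)+1)^β *
          ((∑' n : ℕ, ENNReal.ofReal (((m:ℝ)+(n:ℝ)+2)^(-s) * |a n|)).toReal) ^ p := by
      rw [ENNReal.toReal_mul, ENNReal.toReal_ofReal (by positivity), ENNReal.toReal_rpow]
    rw [hYval]
    have h1 : |∑' n : ℕ, (∫ t in Set.Ico (0:ℝ) 1, t ^ (m + n + 1) ∂μ) * a n| ^ p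
        ≤ C^p * ((∑' n : ℕ, ENNReal.ofReal (((m:ℝ)+(n:ℝ)+2)^(-s) * |a n|)).toReal) ^ p := by
      rw [← Real.mul_rpow hC.le ENNReal.toReal_nonneg]
      exact Real.rpow_le_rpow (abs_nonneg _) (hTm m) hp0.le
    calc ((m:ℝ)+1)^β * |∑' n : ℕ, (∫ t in Set.Ico (0:ℝ) 1, t ^ (m + n + 1) ∂μ) * a n| ^ p
        ≤ ((m:ℝ)+1)^β * (C^p *
          ((∑' n : ℕ, ENNReal.ofReal (((m:ℝ)+(n:ℝ)+2)^(-s) * |a n|)).toReal) ^ p) :=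
          mul_le_mul_of_nonneg_left h1 (by positivity)
      _ = C^p * (((m:ℝ)+1)^β *
          ((∑' n : ℕ, ENNReal.ofReal (((m:ℝ)+(n:ℝ)+2)^(-s) * |a n|)).toReal) ^ p) := by ring
  have hLsum : Summable (fun m : ℕ => ((m:ℝ)+1)^β *
      |∑' n : ℕ, (∫ t in Set.Ico (0:ℝ) 1, t ^ (m + n + 1) ∂μ) * a n| ^ p) :=
    Summable.of_nonneg_of_le (fun m => by positivity) hLY (hYsum.mul_left _)
  have hLle : ∑' m : ℕ, ((m:ℝ)+1)^β *
      |∑' n : ℕ, (∫ t in Set.Ico (0:ℝ) 1, t ^ (m + n + 1) ∂μ) * a n| ^ p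
      ≤ C^p * (K * A) := by
    calc ∑' m : ℕ, ((m:ℝ)+1)^β *
          |∑' n : ℕ, (∫ t in Set.Ico (0:ℝ) 1, t ^ (m + n + 1) ∂μ) * a n| ^ p
        ≤ ∑' m : ℕ, C^p * (ENNReal.ofReal (((m:ℝ)+1)^β) *
          (∑' n : ℕ, ENNReal.ofReal (((m:ℝ)+(n:ℝ)+2)^(-s) * |a n|)) ^ p).toReal :=
          Summable.tsum_le_tsum hLY hLsum (hYsum.mul_left _)
      _ = C^p * ∑' m : ℕ, (ENNReal.ofReal (((m:ℝ)+1)^β) *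
          (∑' n : ℕ, ENNReal.ofReal (((m:ℝ)+(n:ℝ)+2)^(-s) * |a n|)) ^ p).toReal :=
          tsum_mul_left
      _ = C^p * (∑' m : ℕ, ENNReal.ofReal (((m:ℝ)+1)^β) *
          (∑' n : ℕ, ENNReal.ofReal (((m:ℝ)+(n:ℝ)+2)^(-s) * |a n|)) ^ p).toReal := by
          rw [ENNReal.tsum_toReal_eq hYfin]
      _ ≤ C^p * (K * A) := by
          apply mul_le_mul_of_nonneg_left ?_ (by positivity)
          exact ENNReal.toReal_le_of_le_ofReal (by positivity) hU
  calc (∑' m : ℕ, ((m:ℝ)+1)^β *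
        |∑' n : ℕ, (∫ t in Set.Ico (0:ℝ) 1, t ^ (m + n + 1) ∂μ) * a n| ^ p) ^ (1/p)
      ≤ (C^p * (K * A)) ^ (1/p) :=
        Real.rpow_le_rpow (tsum_nonneg (fun m => by positivity)) hLle (by positivity)
    _ = (C^p * K) ^ (1/p) * A ^ (1/p) := by
        rw [show C^p * (K * A) = (C^p * K) * A from by ring,
          Real.mul_rpow (by positivity) hA0]
end

section
/- Let p > 1, -1 < α, β < p-1, and let μ be a positive Borel measure on [0,1). If the operator H_μ(a)(m) = ∑_{n=1}^∞ μ[m+n] a_n is bounded from l^p_α to l^p_β, then μ is a (1+(β-α)/p)-Carleson measure on [0,1): there exists C > 0 such that μ([b,1)) ≤ C(1-b)^{1+(β-α)/p} for all b ∈ [0,1). -/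
open MeasureTheory


lemma sum_test (N m : ℕ) (t : ℝ) :
    ∑ n ∈ Finset.range (3*N), t ^ (m+n+1) *
      (if n < N then (0:ℝ) else if n < 2*N then 1 else if n < 3*N then -1 else 0)
      = ∑ j ∈ Finset.range N, t ^ (m+N+j+1) * (1 - t^N) := by
  rw [Finset.range_eq_Ico,
    ← Finset.sum_Ico_consecutive _ (Nat.zero_le N) (by omega : N ≤ 3*N),
    ← Finset.sum_Ico_consecutive _ (by omega : N ≤ 2*N) (by omega : 2*N ≤ 3*N)]
  have e1 : ∑ n ∈ Finset.Ico 0 N, t ^ (m+n+1) *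
      (if n < N then (0:ℝ) else if n < 2*N then 1 else if n < 3*N then -1 else 0) = 0 := by
    apply Finset.sum_eq_zero
    intro n hn
    rw [Finset.mem_Ico] at hn
    simp [hn.2]
  have e2 : ∑ n ∈ Finset.Ico N (2*N), t ^ (m+n+1) *
      (if n < N then (0:ℝ) else if n < 2*N then 1 else if n < 3*N then -1 else 0)
      = ∑ j ∈ Finset.range N, t ^ (m+N+j+1) := by
    have step1 : ∑ n ∈ Finset.Ico N (2*N), t ^ (m+n+1) *
        (if n < N then (0:ℝ) else if n < 2*N then 1 else if n < 3*N then -1 else 0)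
        = ∑ n ∈ Finset.Ico N (2*N), t ^ (m+n+1) := by
      refine Finset.sum_congr rfl fun n hn => ?_
      rw [Finset.mem_Ico] at hn
      rw [if_neg (by omega), if_pos hn.2, mul_one]
    rw [step1, Finset.sum_Ico_eq_sum_range, (by omega : 2*N - N = N)]
    refine Finset.sum_congr rfl fun j _ => ?_
    congr 1
    omega
  have e3 : ∑ n ∈ Finset.Ico (2*N) (3*N), t ^ (m+n+1) *
      (if n < N then (0:ℝ) else if n < 2*N then 1 else if n < 3*N then -1 else 0)
      = ∑ j ∈ Finset.range N, -(t ^ (m+N+j+1) * t^N) := by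
    have step1 : ∑ n ∈ Finset.Ico (2*N) (3*N), t ^ (m+n+1) *
        (if n < N then (0:ℝ) else if n < 2*N then 1 else if n < 3*N then -1 else 0)
        = ∑ n ∈ Finset.Ico (2*N) (3*N), -(t ^ (m+n+1)) := by
      refine Finset.sum_congr rfl fun n hn => ?_
      rw [Finset.mem_Ico] at hn
      rw [if_neg (by omega), if_neg (by omega), if_pos hn.2, mul_neg_one]
    rw [step1, Finset.sum_Ico_eq_sum_range, (by omega : 3*N - 2*N = N)]
    refine Finset.sum_congr rfl fun j _ => ?_
    rw [show m + (2*N + j) + 1 = m + N + j + 1 + N by omega, pow_add]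
  rw [e1, e2, e3, zero_add, ← Finset.sum_add_distrib]
  exact Finset.sum_congr rfl fun j _ => by ring

-- basic integrability
lemma int_pow (μ : Measure ℝ) [IsFiniteMeasure μ] (k : ℕ) :
    IntegrableOn (fun t : ℝ => t ^ k) (Set.Ico (0:ℝ) 1) μ := by
  apply Integrable.mono' (integrable_const 1) (by fun_prop)
  filter_upwards [ae_restrict_mem measurableSet_Ico] with t ht
  rw [Real.norm_eq_abs, abs_pow, abs_of_nonneg ht.1]
  exact pow_le_one₀ ht.1 ht.2.le

-- Bernoulli: for t ∈ [0,1], 1 - N(1-t) ≤ t^N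
lemma bern (N : ℕ) (t : ℝ) (h0 : 0 ≤ t) : 1 - (N:ℝ)*(1-t) ≤ t^N := by
  have := one_add_mul_le_pow (a := t - 1) (by nlinarith) N
  have h : (1 + (t-1)) = t := by ring
  rw [h] at this
  nlinarith [this]

-- 1 - t^N ≤ N(1-t) for t ∈ [0,1]
lemma bern' (N : ℕ) (t : ℝ) (h0 : 0 ≤ t) : 1 - t^N ≤ (N:ℝ)*(1-t) := by
  have := bern N t h0
  linarith

-- 1 - t^N ≥ N * (1-t) * t^N for t ∈ [0,1]
lemma geom_low (N : ℕ) (t : ℝ) (h0 : 0 ≤ t) (h1 : t ≤ 1) :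
    (N:ℝ) * (1-t) * t^N ≤ 1 - t^N := by
  have key : (N:ℝ) * t^N ≤ ∑ i ∈ Finset.range N, t^i := by
    have := Finset.card_nsmul_le_sum (Finset.range N) (fun i => t^i) (t^N)
      (fun i hi => pow_le_pow_of_le_one h0 h1 (Finset.mem_range.mp hi).le)
    simpa [nsmul_eq_mul] using this
  have id1 : (1-t) * ∑ i ∈ Finset.range N, t^i = 1 - t^N := by
    have := geom_sum_mul t N
    nlinarith [this]
  nlinarith [key, sub_nonneg.mpr h1]

lemma geom_low' (N : ℕ) (t : ℝ) (h0 : 0 ≤ t) (h1 : t ≤ 1) :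
    ((N:ℝ)+1) * (1-t) * t^N ≤ 1 - t^(N+1) := by
  have key : ((N:ℝ)+1) * t^N ≤ ∑ i ∈ Finset.range (N+1), t^i := by
    have h := Finset.card_nsmul_le_sum (Finset.range (N+1)) (fun i => t^i) (t^N)
      (fun i hi => pow_le_pow_of_le_one h0 h1 (by
        have := Finset.mem_range.mp hi; omega))
    rw [Finset.card_range, nsmul_eq_mul] at h
    push_cast at h
    exact h
  have id1 : (1-t) * ∑ i ∈ Finset.range (N+1), t^i = 1 - t^(N+1) := by
    have := geom_sum_mul t (N+1)
    nlinarith [this]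
  nlinarith [key, sub_nonneg.mpr h1]

set_option maxHeartbeats 2000000 in
lemma stage1 (p α β : ℝ) (hp : 1 < p) (hβ' : β < p - 1)
    (μ : Measure ℝ) [IsFiniteMeasure μ] (C' : ℝ) (hC'pos : 0 < C')
    (hC : ∀ a : ℕ → ℝ,
      Summable (fun n : ℕ => ((n : ℝ) + 1) ^ α * |a n| ^ p) →
      (∑' m : ℕ, ((m : ℝ) + 1) ^ β *
          |∑' n : ℕ, (∫ t in Set.Ico (0:ℝ) 1, t ^ (m + n + 1) ∂μ) * a n| ^ p) ^ (1/p)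
        ≤ C' * (∑' n : ℕ, ((n : ℝ) + 1) ^ α * |a n| ^ p) ^ (1/p))
    (N : ℕ) (hN : 1 ≤ N) :
    (μ (Set.Ico (1-1/(2*(N:ℝ))) (1-1/(4*(N:ℝ))))).toReal ≤
      (128 * C' * ((2:ℝ) ^ (1+|β|) * (4:ℝ) ^ |α|) ^ (1/p)) * (N:ℝ) ^ (-(1 + (β - α)/p)) := by
  have hp0 : (0:ℝ) < p := by linarith
  have hp0' : p ≠ 0 := ne_of_gt hp0
  have hNr : (1:ℝ) ≤ (N:ℝ) := by exact_mod_cast hN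
  have hNpos : (0:ℝ) < N := by linarith
  set a : ℕ → ℝ := fun n => if n < N then (0:ℝ) else if n < 2*N then 1 else if n < 3*N then -1 else 0 with ha
  set F : ℕ → ℝ → ℝ := fun m t => ∑ j ∈ Finset.range N, t ^ (m+N+j+1) * (1 - t^N) with hF
  set I : ℕ → ℝ := fun k => ∫ t in Set.Ico (0:ℝ) 1, t ^ k ∂μ with hI
  set H : ℕ → ℝ := fun m => ∫ t in Set.Ico (0:ℝ) 1, F m t ∂μ with hH
  set A : Set ℝ := Set.Ico (1-1/(2*(N:ℝ))) (1-1/(4*(N:ℝ))) with hA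
  set μA : ℝ := (μ A).toReal with hμA
  -- integrability of F m
  have hFint : ∀ m, IntegrableOn (F m) (Set.Ico (0:ℝ) 1) μ := by
    intro m
    apply MeasureTheory.integrable_finset_sum
    intro j _
    have : (fun t : ℝ => t ^ (m+N+j+1) * (1 - t^N)) =
        (fun t : ℝ => t ^ (m+N+j+1) - t ^ (m+N+j+1+N)) := by
      funext t; rw [pow_add]; ring
    rw [this]
    exact (int_pow μ _).sub (int_pow μ _)
  -- inner tsum equals H m
  have hinner : ∀ m : ℕ, (∑' n : ℕ, (∫ t in Set.Ico (0:ℝ) 1, t ^ (m + n + 1) ∂μ) * a n) = H m := by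
    intro m
    rw [tsum_eq_sum (s := Finset.range (3*N)) (fun n hn => by
      have h3 : 3*N ≤ n := by simpa using Finset.mem_range.not.mp hn |> Nat.le_of_not_lt
      have : a n = 0 := by simp only [ha]; rw [if_neg (by omega), if_neg (by omega), if_neg (by omega)]
      rw [this, mul_zero])]
    have : ∀ n ∈ Finset.range (3*N), (∫ t in Set.Ico (0:ℝ) 1, t ^ (m + n + 1) ∂μ) * a n
        = ∫ t in Set.Ico (0:ℝ) 1, t ^ (m + n + 1) * a n ∂μ := by
      intro n _
      rw [MeasureTheory.integral_mul_const]
    rw [Finset.sum_congr rfl this, ← MeasureTheory.integral_finset_sum]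
    · apply MeasureTheory.setIntegral_congr_fun measurableSet_Ico
      intro t _
      exact sum_test N m t
    · intro n _
      exact (int_pow μ _).mul_const _
  -- H nonneg
  have hHnn : ∀ m, 0 ≤ H m := by
    intro m
    apply MeasureTheory.setIntegral_nonneg measurableSet_Ico
    intro t ht
    apply Finset.sum_nonneg
    intro j _
    have h1 : (0:ℝ) ≤ t ^ (m+N+j+1) := pow_nonneg ht.1 _
    have h2 : t ^ N ≤ 1 := pow_le_one₀ ht.1 ht.2.le
    nlinarith
  -- I antitone-ish and nonneg
  have hInn : ∀ k, 0 ≤ I k := fun k =>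
    MeasureTheory.setIntegral_nonneg measurableSet_Ico (fun t ht => pow_nonneg ht.1 _)
  have hIant : ∀ k, I (k+1) ≤ I k := by
    intro k
    apply MeasureTheory.setIntegral_mono_on (int_pow μ _) (int_pow μ _) measurableSet_Ico
    intro t ht
    exact pow_le_pow_of_le_one ht.1 ht.2.le (by omega)
  -- upper bound: H m ≤ N^2 * (I (m+1) - I (m+2))
  have hHub : ∀ m, H m ≤ (N:ℝ)^2 * (I (m+1) - I (m+2)) := by
    intro m
    have pt : ∀ t ∈ Set.Ico (0:ℝ) 1, F m t ≤ (N:ℝ)^2 * (t^(m+1) - t^(m+2)) := by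
      intro t ht
      have hb : ∀ j ∈ Finset.range N, t ^ (m+N+j+1) * (1 - t^N) ≤ t^(m+1) * ((N:ℝ)*(1-t)) := by
        intro j _
        have h1 : t ^ (m+N+j+1) ≤ t^(m+1) := pow_le_pow_of_le_one ht.1 ht.2.le (by omega)
        have h2 : 1 - t^N ≤ (N:ℝ)*(1-t) := bern' N t ht.1
        have h3 : (0:ℝ) ≤ 1 - t^N := by
          have := pow_le_one₀ ht.1 ht.2.le (n := N); linarith
        have h4 : (0:ℝ) ≤ t^(m+1) := pow_nonneg ht.1 _
        nlinarith
      calc F m t ≤ ∑ j ∈ Finset.range N, t^(m+1) * ((N:ℝ)*(1-t)) := Finset.sum_le_sum hb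
        _ = (N:ℝ)^2 * (t^(m+1) - t^(m+2)) := by
            rw [Finset.sum_const, Finset.card_range, nsmul_eq_mul]
            have : t^(m+2) = t^(m+1) * t := by rw [pow_succ]
            rw [this]; ring
    calc H m ≤ ∫ t in Set.Ico (0:ℝ) 1, (N:ℝ)^2 * (t^(m+1) - t^(m+2)) ∂μ := by
          apply MeasureTheory.setIntegral_mono_on (hFint m) _ measurableSet_Ico pt
          exact (((int_pow μ (m+1)).sub (int_pow μ (m+2))).const_mul _)
      _ = (N:ℝ)^2 * (I (m+1) - I (m+2)) := by
          rw [MeasureTheory.integral_const_mul, MeasureTheory.integral_sub (int_pow μ _) (int_pow μ _)]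
  -- sup-type bound : H m ≤ N^2 * (μ univ).toReal / (m+2)
  have hHub2 : ∀ m, H m ≤ (N:ℝ)^2 * (μ Set.univ).toReal / ((m:ℝ)+2) := by
    intro m
    have pt : ∀ t ∈ Set.Ico (0:ℝ) 1, F m t ≤ (N:ℝ)^2 / ((m:ℝ)+2) := by
      intro t ht
      have hb : ∀ j ∈ Finset.range N, t ^ (m+N+j+1) * (1 - t^N) ≤ t^(m+1) * ((N:ℝ)*(1-t)) := by
        intro j _
        have h1 : t ^ (m+N+j+1) ≤ t^(m+1) := pow_le_pow_of_le_one ht.1 ht.2.le (by omega)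
        have h2 : 1 - t^N ≤ (N:ℝ)*(1-t) := bern' N t ht.1
        have h3 : (0:ℝ) ≤ 1 - t^N := by
          have := pow_le_one₀ ht.1 ht.2.le (n := N); linarith
        have h4 : (0:ℝ) ≤ t^(m+1) := pow_nonneg ht.1 _
        nlinarith
      have key : ((m:ℝ)+2) * (t^(m+1) * (1-t)) ≤ 1 := by
        have := geom_low' (m+1) t ht.1 ht.2.le
        have h6 : (0:ℝ) ≤ t^(m+2) := pow_nonneg ht.1 _
        push_cast at this
        nlinarith
      calc F m t ≤ ∑ j ∈ Finset.range N, t^(m+1) * ((N:ℝ)*(1-t)) := Finset.sum_le_sum hb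
        _ = (N:ℝ)^2 * (t^(m+1) * (1-t)) := by
            rw [Finset.sum_const, Finset.card_range, nsmul_eq_mul]; ring
        _ ≤ (N:ℝ)^2 / ((m:ℝ)+2) := by
            rw [div_eq_mul_inv]
            apply mul_le_mul_of_nonneg_left _ (by positivity)
            have hm2 : (0:ℝ) < (m:ℝ)+2 := by positivity
            rw [inv_eq_one_div]
            exact (le_div_iff₀ hm2).mpr (by linarith [key])
    calc H m ≤ ∫ _ in Set.Ico (0:ℝ) 1, (N:ℝ)^2 / ((m:ℝ)+2) ∂μ := by
          apply MeasureTheory.setIntegral_mono_on (hFint m) ((integrableOn_const_iff enorm_ne_top).mpr (Or.inr (measure_lt_top μ _))) measurableSet_Ico pt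
      _ = (μ (Set.Ico (0:ℝ) 1)).toReal * ((N:ℝ)^2 / ((m:ℝ)+2)) := by
          rw [MeasureTheory.setIntegral_const, smul_eq_mul]; rfl
      _ ≤ (μ Set.univ).toReal * ((N:ℝ)^2 / ((m:ℝ)+2)) := by
          apply mul_le_mul_of_nonneg_right _ (by positivity)
          exact ENNReal.toReal_mono (measure_ne_top μ _) (measure_mono (Set.subset_univ _))
      _ = (N:ℝ)^2 * (μ Set.univ).toReal / ((m:ℝ)+2) := by ring
  -- summability of the telescoping differences
  have hdnn : ∀ m : ℕ, 0 ≤ I (m+1) - I (m+2) := fun m => sub_nonneg.mpr (hIant (m+1))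
  have hdsum : Summable (fun m : ℕ => I (m+1) - I (m+2)) := by
    apply summable_of_sum_range_le hdnn
    intro n
    have hts : ∑ i ∈ Finset.range n, (I (i+1) - I (i+2)) = I 1 - I (n+1) :=
      Finset.sum_range_sub' (fun i => I (i+1)) n
    rw [hts]
    linarith [hInn (n+1)]
  set f : ℕ → ℝ := fun m => ((m:ℝ)+1)^β * |H m|^p with hf
  have hfnn : ∀ m, 0 ≤ f m := fun m =>
    mul_nonneg (Real.rpow_nonneg (by positivity) _) (Real.rpow_nonneg (abs_nonneg _) _)
  have hmb : ∀ m : ℕ, ((m:ℝ)+1)^β ≤ ((m:ℝ)+2)^(p-1) := by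
    intro m
    have h1 : (1:ℝ) ≤ (m:ℝ)+1 := by linarith [(Nat.cast_nonneg m : (0:ℝ) ≤ m)]
    rcases le_or_gt β 0 with hb | hb
    · exact le_trans (Real.rpow_le_one_of_one_le_of_nonpos h1 hb)
        (Real.one_le_rpow (by linarith) (by linarith))
    · exact le_trans (Real.rpow_le_rpow (by linarith) (by linarith) hb.le)
        (Real.rpow_le_rpow_of_exponent_le (by linarith) (by linarith))
  set B : ℝ := (N:ℝ)^2 * (μ Set.univ).toReal with hB
  have hBnn : 0 ≤ B := by positivity
  have hfb : ∀ m, f m ≤ (B^(p-1) * (N:ℝ)^2) * (I (m+1) - I (m+2)) := by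
    intro m
    have hm2pos : (0:ℝ) < (m:ℝ)+2 := by positivity
    have habs : |H m| = H m := abs_of_nonneg (hHnn m)
    have hkey : H m ^ p ≤ (B/((m:ℝ)+2))^(p-1) * ((N:ℝ)^2*(I (m+1)-I (m+2))) := by
      rcases eq_or_lt_of_le (hHnn m) with h0 | h0
      · rw [← h0, Real.zero_rpow hp0']
        exact mul_nonneg (Real.rpow_nonneg (by positivity) _)
          (mul_nonneg (by positivity) (hdnn m))
      · have hsplit : H m ^ p = H m ^ (p-1) * H m := by
          nth_rewrite 1 [show p = (p-1)+1 by ring]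
          rw [Real.rpow_add_one (ne_of_gt h0)]
        rw [hsplit]
        apply mul_le_mul _ (hHub m) (le_of_lt h0) (Real.rpow_nonneg (by positivity) _)
        exact Real.rpow_le_rpow (le_of_lt h0) (by have := hHub2 m; linarith [this]) (by linarith)
    have hstep : ((m:ℝ)+1)^β * (B/((m:ℝ)+2))^(p-1) ≤ B^(p-1) := by
      have hpos : (0:ℝ) < ((m:ℝ)+2)^(p-1) := Real.rpow_pos_of_pos hm2pos _
      have hle1 : ((m:ℝ)+1)^β * (((m:ℝ)+2)^(p-1))⁻¹ ≤ 1 := by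
        calc ((m:ℝ)+1)^β * (((m:ℝ)+2)^(p-1))⁻¹
            ≤ ((m:ℝ)+2)^(p-1) * (((m:ℝ)+2)^(p-1))⁻¹ :=
              mul_le_mul_of_nonneg_right (hmb m) (by positivity)
          _ = 1 := mul_inv_cancel₀ (ne_of_gt hpos)
      rw [Real.div_rpow hBnn hm2pos.le, div_eq_mul_inv]
      calc ((m:ℝ)+1)^β * (B^(p-1) * ((((m:ℝ)+2)^(p-1))⁻¹))
          = B^(p-1) * (((m:ℝ)+1)^β * ((((m:ℝ)+2)^(p-1))⁻¹)) := by ring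
        _ ≤ B^(p-1) * 1 := mul_le_mul_of_nonneg_left hle1 (Real.rpow_nonneg hBnn _)
        _ = B^(p-1) := mul_one _
    calc f m = ((m:ℝ)+1)^β * (H m)^p := by rw [hf]; simp only [habs]
      _ ≤ ((m:ℝ)+1)^β * ((B/((m:ℝ)+2))^(p-1) * ((N:ℝ)^2*(I (m+1)-I (m+2)))) := by
          apply mul_le_mul_of_nonneg_left hkey (Real.rpow_nonneg (by positivity) _)
      _ = (((m:ℝ)+1)^β * (B/((m:ℝ)+2))^(p-1)) * ((N:ℝ)^2*(I (m+1)-I (m+2))) := by ring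
      _ ≤ B^(p-1) * ((N:ℝ)^2*(I (m+1)-I (m+2))) := by
          apply mul_le_mul_of_nonneg_right hstep
          have := hdnn m; positivity
      _ = (B^(p-1) * (N:ℝ)^2) * (I (m+1) - I (m+2)) := by ring
  have hfsum : Summable f :=
    Summable.of_nonneg_of_le hfnn hfb (hdsum.mul_left _)
  -- test sequence norm
  have haSummable : Summable (fun n : ℕ => ((n:ℝ)+1)^α * |a n|^p) := by
    apply summable_of_ne_finset_zero (s := Finset.range (3*N))
    intro n hn
    have h3 : 3*N ≤ n := Nat.le_of_not_lt (Finset.mem_range.not.mp hn)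
    have hz : a n = 0 := by
      simp only [ha]
      rw [if_neg (by omega), if_neg (by omega), if_neg (by omega)]
    rw [hz, abs_zero, Real.zero_rpow hp0', mul_zero]
  have hT : (∑' n : ℕ, ((n:ℝ)+1)^α * |a n|^p) = ∑ n ∈ Finset.Ico N (3*N), ((n:ℝ)+1)^α := by
    rw [tsum_eq_sum (s := Finset.Ico N (3*N)) (fun n hn => by
      rw [Finset.mem_Ico] at hn
      push_neg at hn
      have hz : a n = 0 := by
        simp only [ha]
        rcases Nat.lt_or_ge n N with h | h
        · rw [if_pos h]
        · rw [if_neg (by omega), if_neg (by omega), if_neg (by omega)]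
      rw [hz, abs_zero, Real.zero_rpow hp0', mul_zero])]
    refine Finset.sum_congr rfl fun n hn => ?_
    rw [Finset.mem_Ico] at hn
    have habs : |a n| = 1 := by
      simp only [ha]
      rcases Nat.lt_or_ge n (2*N) with h | h
      · rw [if_neg (by omega), if_pos h, abs_one]
      · rw [if_neg (by omega), if_neg (by omega), if_pos hn.2, abs_neg, abs_one]
    rw [habs, Real.one_rpow, mul_one]
  -- lower bound for H on the annulus
  have hAsub : A ⊆ Set.Ico (0:ℝ) 1 := by
    intro t ht
    rw [hA, Set.mem_Ico] at ht
    have h2N : (1:ℝ)/(2*(N:ℝ)) ≤ 1/2 := by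
      apply one_div_le_one_div_of_le (by norm_num)
      linarith
    constructor
    · linarith
    · have : (0:ℝ) < 1/(4*(N:ℝ)) := by positivity
      linarith
  have hFnnA : ∀ m, ∀ t ∈ Set.Ico (0:ℝ) 1, 0 ≤ F m t := by
    intro m t ht
    apply Finset.sum_nonneg
    intro j _
    have h1 : (0:ℝ) ≤ t ^ (m+N+j+1) := pow_nonneg ht.1 _
    have h2 : t ^ N ≤ 1 := pow_le_one₀ ht.1 ht.2.le
    nlinarith
  have hHlow : ∀ m ∈ Finset.Ico N (2*N), (N:ℝ)/128 * μA ≤ H m := by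
    intro m hm
    rw [Finset.mem_Ico] at hm
    have hpt : ∀ t ∈ A, (N:ℝ)/128 ≤ F m t := by
      intro t ht
      rw [hA, Set.mem_Ico] at ht
      have ht01 := hAsub (by rw [hA, Set.mem_Ico]; exact ht)
      have ht0 : (0:ℝ) ≤ t := ht01.1
      have ht1 : t ≤ 1 := ht01.2.le
      have h2Npos : (0:ℝ) < 2*(N:ℝ) := by positivity
      have h4Npos : (0:ℝ) < 4*(N:ℝ) := by positivity
      have htN : (1:ℝ)/2 ≤ t^N := by
        have hb := bern N t ht0
        have h1t : 1 - t ≤ 1/(2*(N:ℝ)) := by linarith [ht.1]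
        have : (N:ℝ)*(1-t) ≤ (N:ℝ)*(1/(2*(N:ℝ))) :=
          mul_le_mul_of_nonneg_left h1t (by positivity)
        have heq : (N:ℝ)*(1/(2*(N:ℝ))) = 1/2 := by field_simp
        rw [heq] at this
        linarith
      have ht4N : (1:ℝ)/16 ≤ t^(4*N) := by
        have : t^(4*N) = (t^N)^4 := by rw [← pow_mul, Nat.mul_comm]
        rw [this]
        have h := pow_le_pow_left₀ (by norm_num : (0:ℝ) ≤ 1/2) htN 4
        norm_num at h ⊢
        linarith
      have htNub : (1:ℝ)/8 ≤ 1 - t^N := by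
        have hg := geom_low N t ht0 ht1
        have h1t : 1/(4*(N:ℝ)) ≤ 1 - t := by linarith [ht.2]
        have h1 : (N:ℝ)*(1/(4*(N:ℝ))) = 1/4 := by field_simp
        have h2 : (1:ℝ)/4 * (1/2) ≤ (N:ℝ)*(1-t) * t^N := by
          apply mul_le_mul _ htN (by norm_num) (mul_nonneg (by positivity) (by linarith))
          rw [← h1]
          exact mul_le_mul_of_nonneg_left h1t (by positivity)
        nlinarith
      have hterm : ∀ j ∈ Finset.range N, (1:ℝ)/128 ≤ t ^ (m+N+j+1) * (1 - t^N) := by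
        intro j hj
        rw [Finset.mem_range] at hj
        have hexp : t^(4*N) ≤ t^(m+N+j+1) := pow_le_pow_of_le_one ht0 ht1 (by omega)
        have h1 : (1:ℝ)/16 ≤ t^(m+N+j+1) := le_trans ht4N hexp
        nlinarith
      have := Finset.card_nsmul_le_sum (Finset.range N) _ _ hterm
      rw [Finset.card_range, nsmul_eq_mul] at this
      calc (N:ℝ)/128 = (N:ℝ) * (1/128) := by ring
        _ ≤ F m t := this
    have hint_A : IntegrableOn (F m) A μ := (hFint m).mono_set hAsub
    have h1 : ∫ _ in A, ((N:ℝ)/128) ∂μ ≤ ∫ t in A, F m t ∂μ := by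
      apply MeasureTheory.setIntegral_mono_on
        ((integrableOn_const_iff enorm_ne_top).mpr (Or.inr (measure_lt_top μ _))) hint_A _ hpt
      rw [hA]; exact measurableSet_Ico
    have h2 : ∫ t in A, F m t ∂μ ≤ H m := by
      apply MeasureTheory.setIntegral_mono_set (hFint m)
      · filter_upwards [ae_restrict_mem measurableSet_Ico] with t ht
        exact hFnnA m t ht
      · exact HasSubset.Subset.eventuallyLE hAsub
    rw [MeasureTheory.setIntegral_const, smul_eq_mul] at h1
    calc (N:ℝ)/128 * μA = μA * ((N:ℝ)/128) := by ring
      _ ≤ ∫ t in A, F m t ∂μ := h1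
      _ ≤ H m := h2
  -- apply the boundedness hypothesis
  have happ := hC a haSummable
  have hSeq : (∑' m : ℕ, ((m:ℝ)+1)^β *
      |∑' n : ℕ, (∫ t in Set.Ico (0:ℝ) 1, t ^ (m + n + 1) ∂μ) * a n| ^ p) = ∑' m, f m :=
    tsum_congr fun m => by rw [hinner m]
  rw [hSeq, hT] at happ
  set T : ℝ := ∑ n ∈ Finset.Ico N (3*N), ((n:ℝ)+1)^α with hTdef
  have hTnn : 0 ≤ T := Finset.sum_nonneg fun n _ => Real.rpow_nonneg (by positivity) _
  have hDnn : 0 ≤ ∑' m, f m := tsum_nonneg hfnn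
  have hDle : (∑' m, f m) ≤ C'^p * T := by
    have h1 := Real.rpow_le_rpow (Real.rpow_nonneg hDnn _) happ hp0.le
    rwa [← Real.rpow_mul hDnn, one_div_mul_cancel hp0', Real.rpow_one,
      Real.mul_rpow hC'pos.le (Real.rpow_nonneg hTnn _),
      ← Real.rpow_mul hTnn, one_div_mul_cancel hp0', Real.rpow_one] at h1
  -- lower bound of the partial sum
  have hμAnn : 0 ≤ μA := ENNReal.toReal_nonneg
  set X : ℝ := (N:ℝ)/128 * μA with hX
  have hXnn : 0 ≤ X := by positivity
  set u : ℝ := (2:ℝ)^(-|β|) with hu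
  set v : ℝ := (N:ℝ)^β with hv
  set w : ℝ := (4:ℝ)^|α| with hw
  set z : ℝ := (N:ℝ)^α with hz
  have hupos : 0 < u := Real.rpow_pos_of_pos (by norm_num) _
  have hvpos : 0 < v := Real.rpow_pos_of_pos hNpos _
  have hwpos : 0 < w := Real.rpow_pos_of_pos (by norm_num) _
  have hzpos : 0 < z := Real.rpow_pos_of_pos hNpos _
  have hlow2 : (N:ℝ) * (u * v * X^p) ≤ ∑ m ∈ Finset.Ico N (2*N), f m := by
    have hbound : ∀ m ∈ Finset.Ico N (2*N), u * v * X^p ≤ f m := by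
      intro m hm
      have hmIco := hm
      rw [Finset.mem_Ico] at hm
      have hmc1 : (N:ℝ) ≤ (m:ℝ)+1 := by
        have : (N:ℝ) ≤ (m:ℝ) := by exact_mod_cast hm.1
        linarith
      have hmc2 : (m:ℝ)+1 ≤ 2*(N:ℝ) := by
        have : (m:ℕ)+1 ≤ 2*N := hm.2
        exact_mod_cast this
      have hfacts : u * v ≤ ((m:ℝ)+1)^β := by
        rcases le_or_gt 0 β with hb | hb
        · have h1 : u ≤ 1 := Real.rpow_le_one_of_one_le_of_nonpos (by norm_num)
            (neg_nonpos.mpr (abs_nonneg β))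
          have h2 : v ≤ ((m:ℝ)+1)^β := Real.rpow_le_rpow hNpos.le hmc1 hb
          have h3 : 0 ≤ v := hvpos.le
          nlinarith [Real.rpow_nonneg (show (0:ℝ) ≤ (m:ℝ)+1 by positivity) β]
        · have heq : u * v = (2*(N:ℝ))^β := by
            rw [hu, hv, Real.mul_rpow (by norm_num) hNpos.le, abs_of_neg hb, neg_neg]
          rw [heq]
          exact Real.rpow_le_rpow_of_nonpos (by positivity) hmc2 hb.le
      have hXle : X^p ≤ |H m|^p := by
        apply Real.rpow_le_rpow hXnn _ hp0.le
        rw [abs_of_nonneg (hHnn m)]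
        exact hHlow m hmIco
      have h0 : (0:ℝ) ≤ ((m:ℝ)+1)^β := Real.rpow_nonneg (by positivity) _
      calc u * v * X^p ≤ ((m:ℝ)+1)^β * |H m|^p :=
            mul_le_mul hfacts hXle (Real.rpow_nonneg hXnn _) h0
        _ = f m := rfl
    have := Finset.card_nsmul_le_sum (Finset.Ico N (2*N)) f (u * v * X^p) hbound
    rw [Nat.card_Ico, (by omega : 2*N - N = N), nsmul_eq_mul] at this
    exact_mod_cast this
  have hpart : ∑ m ∈ Finset.Ico N (2*N), f m ≤ ∑' m, f m :=
    Summable.sum_le_tsum _ (fun m _ => hfnn m) hfsum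
  have hTle : T ≤ 2*(N:ℝ) * (w * z) := by
    have hbound : ∀ n ∈ Finset.Ico N (3*N), ((n:ℝ)+1)^α ≤ w * z := by
      intro n hn
      rw [Finset.mem_Ico] at hn
      have hnc1 : (N:ℝ) ≤ (n:ℝ)+1 := by
        have : (N:ℝ) ≤ (n:ℝ) := by exact_mod_cast hn.1
        linarith
      have hnc2 : (n:ℝ)+1 ≤ 4*(N:ℝ) := by
        have : (n:ℕ)+1 ≤ 4*N := by omega
        exact_mod_cast this
      rcases le_or_gt 0 α with hb | hb
      · have heq : w * z = (4*(N:ℝ))^α := by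
          rw [hw, hz, Real.mul_rpow (by norm_num) hNpos.le, abs_of_nonneg hb]
        rw [heq]
        exact Real.rpow_le_rpow (by positivity) hnc2 hb
      · have h1 : ((n:ℝ)+1)^α ≤ z := Real.rpow_le_rpow_of_nonpos hNpos hnc1 hb.le
        have h2 : (1:ℝ) ≤ w := Real.one_le_rpow (by norm_num) (abs_nonneg α)
        nlinarith
    have := Finset.sum_le_card_nsmul (Finset.Ico N (3*N)) _ _ hbound
    rw [Nat.card_Ico, (by omega : 3*N - N = 2*N), nsmul_eq_mul] at this
    calc T ≤ ((2*N : ℕ) : ℝ) * (w * z) := this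
      _ = 2*(N:ℝ) * (w * z) := by push_cast; ring
  -- combine
  have hmain : (N:ℝ) * (u * v * X^p) ≤ C'^p * (2*(N:ℝ) * (w * z)) := by
    calc (N:ℝ) * (u * v * X^p) ≤ ∑ m ∈ Finset.Ico N (2*N), f m := hlow2
      _ ≤ ∑' m, f m := hpart
      _ ≤ C'^p * T := hDle
      _ ≤ C'^p * (2*(N:ℝ) * (w * z)) := by
          apply mul_le_mul_of_nonneg_left hTle (Real.rpow_nonneg hC'pos.le _)
  have hXp : X^p ≤ C'^p * (2 * w * z * u⁻¹ * v⁻¹) := by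
    have hNuv : 0 < (N:ℝ) * (u * v) := by positivity
    have h1 : X^p * ((N:ℝ) * (u * v)) ≤ C'^p * (2 * w * z) * (N:ℝ) := by
      nlinarith [hmain]
    have h2 : X^p ≤ C'^p * (2 * w * z) * (N:ℝ) / ((N:ℝ) * (u * v)) :=
      (le_div_iff₀ hNuv).mpr h1
    calc X^p ≤ C'^p * (2 * w * z) * (N:ℝ) / ((N:ℝ) * (u * v)) := h2
      _ = C'^p * (2 * w * z * u⁻¹ * v⁻¹) := by
          field_simp
  have hXp2 : X^p ≤ (C'^p * ((2:ℝ)^((1:ℝ)+|β|) * w)) * (N:ℝ)^(α-β) := by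
    calc X^p ≤ C'^p * (2 * w * z * u⁻¹ * v⁻¹) := hXp
      _ = (C'^p * ((2:ℝ)^((1:ℝ)+|β|) * w)) * (N:ℝ)^(α-β) := by
          rw [hu, hv, hz, Real.rpow_neg (by norm_num : (0:ℝ) ≤ 2), inv_inv,
            ← Real.rpow_neg hNpos.le,
            Real.rpow_add (by norm_num : (0:ℝ) < 2) 1 |β|, Real.rpow_one,
            show α - β = α + (-β) by ring, Real.rpow_add hNpos]
          ring
  set Y : ℝ := C'^p * ((2:ℝ)^((1:ℝ)+|β|) * w) with hY
  have hYnn : 0 ≤ (2:ℝ)^((1:ℝ)+|β|) * w := by positivity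
  have hroot : X ≤ (C' * ((2:ℝ)^((1:ℝ)+|β|) * w)^(1/p)) * (N:ℝ)^((α-β)/p) := by
    have h1 : X = (X^p)^(1/p) := by
      rw [← Real.rpow_mul hXnn, mul_one_div_cancel hp0', Real.rpow_one]
    have h2 : X ≤ (Y * (N:ℝ)^(α-β))^(1/p) := by
      rw [h1]
      exact Real.rpow_le_rpow (Real.rpow_nonneg hXnn _) hXp2 (by positivity)
    have h3 : (Y * (N:ℝ)^(α-β))^(1/p)
        = (C' * ((2:ℝ)^((1:ℝ)+|β|) * w)^(1/p)) * (N:ℝ)^((α-β)/p) := by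
      rw [Real.mul_rpow (by positivity) (Real.rpow_nonneg hNpos.le _), hY,
        Real.mul_rpow (Real.rpow_nonneg hC'pos.le _) hYnn,
        ← Real.rpow_mul hC'pos.le, mul_one_div_cancel hp0', Real.rpow_one,
        ← Real.rpow_mul hNpos.le, mul_one_div]
    rw [h3] at h2
    exact h2
  have hμAX : μA = X * (128/(N:ℝ)) := by
    rw [hX]
    field_simp
  have hNfin : (N:ℝ)^((α-β)/p) * (128/(N:ℝ)) = 128 * (N:ℝ)^(-(1+(β-α)/p)) := by
    have h128 : (128:ℝ)/(N:ℝ) = 128 * (N:ℝ)^(-(1:ℝ)) := by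
      rw [Real.rpow_neg_one]; ring
    rw [h128, ← mul_assoc, mul_comm ((N:ℝ)^((α-β)/p)) 128, mul_assoc,
      ← Real.rpow_add hNpos]
    congr 1
    ring
  rw [hμAX]
  calc X * (128/(N:ℝ)) ≤ ((C' * ((2:ℝ)^((1:ℝ)+|β|) * w)^(1/p)) * (N:ℝ)^((α-β)/p)) * (128/(N:ℝ)) := by
        apply mul_le_mul_of_nonneg_right hroot (by positivity)
    _ = (128 * C' * ((2:ℝ)^((1:ℝ)+|β|) * w)^(1/p)) * (N:ℝ)^(-(1+(β-α)/p)) := by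
        rw [mul_assoc, hNfin]
        ring
    _ = (128 * C' * ((2:ℝ)^((1:ℝ)+|β|) * (4:ℝ)^|α|)^(1/p)) * (N:ℝ)^(-(1+(β-α)/p)) := by
        rw [hw]

set_option maxHeartbeats 2000000 in
theorem stmt_6 (p α β : ℝ) (hp : 1 < p)
    (hα : -1 < α) (hα' : α < p - 1) (hβ : -1 < β) (hβ' : β < p - 1)
    (μ : Measure ℝ) [IsFiniteMeasure μ]
    (hbdd : ∃ C' : ℝ, 0 < C' ∧ ∀ a : ℕ → ℝ,
      Summable (fun n : ℕ => ((n : ℝ) + 1) ^ α * |a n| ^ p) →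
      (∑' m : ℕ, ((m : ℝ) + 1) ^ β *
          |∑' n : ℕ, (∫ t in Set.Ico (0:ℝ) 1, t ^ (m + n + 1) ∂μ) * a n| ^ p) ^ (1/p)
        ≤ C' * (∑' n : ℕ, ((n : ℝ) + 1) ^ α * |a n| ^ p) ^ (1/p)) :
    ∃ C : ℝ, 0 < C ∧ ∀ b : ℝ, 0 ≤ b → b < 1 →
      (μ (Set.Ico b 1)).toReal ≤ C * (1 - b) ^ (1 + (β - α)/p) := by
  obtain ⟨C', hC'pos, hC⟩ := hbdd
  have hp0 : (0:ℝ) < p := by linarith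
  have hp0' : p ≠ 0 := ne_of_gt hp0
  set γ : ℝ := 1 + (β - α)/p with hγdef
  have hγpos : 0 < γ := by
    have h1 : (-1:ℝ) * p < β - α := by nlinarith
    have h2 : (-1:ℝ) < (β - α)/p := (lt_div_iff₀ hp0).mpr h1
    simp only [hγdef]; linarith
  have hγ2 : γ ≤ 2 := by
    have : (β - α)/p ≤ 1 := by rw [div_le_one hp0]; linarith
    simp only [hγdef]; linarith
  set K : ℝ := 128 * C' * ((2:ℝ)^((1:ℝ)+|β|) * (4:ℝ)^|α|)^(1/p) with hK
  have hKpos : 0 < K := by positivity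
  set r : ℝ := (2:ℝ)^(-γ) with hr
  have hrlt : r < 1 := Real.rpow_lt_one_of_one_lt_of_neg (by norm_num) (by linarith)
  have hrnn : 0 ≤ r := Real.rpow_nonneg (by norm_num) _
  have hrpos : 0 < 1 - r := by linarith
  set μu : ℝ := (μ Set.univ).toReal with hμu
  have hμunn : 0 ≤ μu := ENNReal.toReal_nonneg
  refine ⟨16*K/(1-r) + 4*μu + 4, by positivity, ?_⟩
  intro b hb0 hb1
  have h1b : (0:ℝ) < 1 - b := by linarith
  have hpowγnn : 0 ≤ (1-b)^γ := Real.rpow_nonneg h1b.le _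
  rcases lt_or_ge b (1/2) with hbs | hbl
  · -- small b : trivial bound
    have hμle : (μ (Set.Ico b 1)).toReal ≤ μu :=
      ENNReal.toReal_mono (measure_ne_top μ _) (measure_mono (Set.subset_univ _))
    have hq : (1:ℝ)/4 ≤ (1-b)^γ := by
      have h14 : ((1:ℝ)/2)^(2:ℝ) ≤ ((1:ℝ)/2)^γ :=
        Real.rpow_le_rpow_of_exponent_ge (by norm_num) (by norm_num) hγ2
      have h142 : ((1:ℝ)/2)^(2:ℝ) = 1/4 := by
        rw [show (2:ℝ) = ((2:ℕ):ℝ) by norm_num, Real.rpow_natCast]; norm_num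
      have h15 : ((1:ℝ)/2)^γ ≤ (1-b)^γ :=
        Real.rpow_le_rpow (by norm_num) (by linarith) hγpos.le
      linarith
    calc (μ (Set.Ico b 1)).toReal ≤ μu := hμle
      _ = 4*μu * (1/4) := by ring
      _ ≤ 4*μu * (1-b)^γ := by
          apply mul_le_mul_of_nonneg_left hq (by positivity)
      _ ≤ (16*K/(1-r) + 4*μu + 4) * (1-b)^γ := by
          apply mul_le_mul_of_nonneg_right _ hpowγnn
          have : 0 ≤ 16*K/(1-r) := by positivity
          linarith
  · -- main case
    set N0 : ℕ := ⌊1/(2*(1-b))⌋₊ with hN0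
    have harg1 : (1:ℝ) ≤ 1/(2*(1-b)) := by
      rw [le_div_iff₀ (by positivity)]
      linarith
    have hN0ge1 : 1 ≤ N0 := by
      rw [hN0]
      exact Nat.le_floor (by exact_mod_cast harg1)
    have hN0pos : (0:ℝ) < N0 := by exact_mod_cast hN0ge1
    have hN0le : (N0:ℝ) ≤ 1/(2*(1-b)) := Nat.floor_le (by positivity)
    have hblow : 1 - 1/(2*(N0:ℝ)) ≤ b := by
      have h1 : 1 - b ≤ 1/(2*(N0:ℝ)) := by
        rw [le_div_iff₀ (by positivity : (0:ℝ) < 2*(N0:ℝ))]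
        have h2 := mul_le_mul_of_nonneg_left hN0le
          (le_of_lt (show (0:ℝ) < 2*(1-b) by positivity))
        have heq : 2*(1-b) * (1/(2*(1-b))) = 1 := by field_simp
        rw [heq] at h2
        nlinarith
      linarith
    have hN0up : (N0:ℝ)⁻¹ ≤ 4*(1-b) := by
      have h1 : 1/(2*(1-b)) < (N0:ℝ) + 1 := Nat.lt_floor_add_one _
      have h2 : (N0:ℝ) + 1 ≤ 2*(N0:ℝ) := by
        have : (1:ℝ) ≤ (N0:ℝ) := by exact_mod_cast hN0ge1
        linarith
      have h3 : 1/(2*(1-b)) < 2*(N0:ℝ) := by linarith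
      rw [div_lt_iff₀ (by positivity : (0:ℝ) < 2*(1-b))] at h3
      rw [← one_div, div_le_iff₀ hN0pos]
      nlinarith
    -- covering by annuli
    set A' : ℕ → Set ℝ := fun k =>
      Set.Ico (1-1/(2*(((2^k*N0 : ℕ)):ℝ))) (1-1/(4*(((2^k*N0 : ℕ)):ℝ))) with hA'
    have hNk1 : ∀ k : ℕ, 1 ≤ 2^k*N0 := fun k =>
      Nat.one_le_iff_ne_zero.mpr (by positivity)
    have hNkr : ∀ k : ℕ, ((2^k*N0 : ℕ):ℝ) = 2^k * (N0:ℝ) := fun k => by push_cast; ring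
    have hcover : Set.Ico b 1 ⊆ ⋃ k : ℕ, A' k := by
      intro t ht
      rw [Set.mem_Ico] at ht
      have h1t : (0:ℝ) < 1 - t := by linarith
      have hex : ∃ k : ℕ, t < 1 - 1/(4*(((2^k*N0 : ℕ)):ℝ)) := by
        obtain ⟨k, hk⟩ := exists_pow_lt_of_lt_one h1t (show (1:ℝ)/2 < 1 by norm_num)
        refine ⟨k, ?_⟩
        have h2k : (0:ℝ) < 2^k := by positivity
        have hle : 1/(4*(((2^k*N0 : ℕ)):ℝ)) ≤ (1/2:ℝ)^k := by
          rw [hNkr k, div_pow, one_pow]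
          apply div_le_div_of_nonneg_left (by norm_num) h2k
          nlinarith [h2k, (show (1:ℝ) ≤ (N0:ℝ) by exact_mod_cast hN0ge1)]
        linarith
      have hk0 := Nat.find_spec hex
      refine Set.mem_iUnion.mpr ⟨Nat.find hex, ?_, hk0⟩
      rcases Nat.eq_zero_or_pos (Nat.find hex) with h0 | h0
      · rw [h0]
        have : ((2^0*N0 : ℕ):ℝ) = (N0:ℝ) := by norm_num
        rw [this]
        linarith
      · obtain ⟨k, hk⟩ : ∃ k, Nat.find hex = k + 1 := ⟨Nat.find hex - 1, by omega⟩
        have hmin := Nat.find_min hex (by omega : k < Nat.find hex)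
        push_neg at hmin
        rw [hk]
        have heq : 4*(((2^k*N0 : ℕ)):ℝ) = 2*(((2^(k+1)*N0 : ℕ)):ℝ) := by
          rw [hNkr k, hNkr (k+1)]
          ring
        rw [← heq]
        exact hmin
    -- measure bound
    have hann : ∀ k : ℕ, μ (A' k) ≤ ENNReal.ofReal (K * (N0:ℝ)^(-γ) * r^k) := by
      intro k
      have hst := stage1 p α β hp hβ' μ C' hC'pos hC (2^k*N0) (hNk1 k)
      rw [← ENNReal.ofReal_toReal (measure_ne_top μ (A' k))]
      apply ENNReal.ofReal_le_ofReal
      have hform : (128 * C' * ((2:ℝ)^((1:ℝ)+|β|) * (4:ℝ)^|α|)^(1/p)) * ((2^k*N0 : ℕ):ℝ)^(-γ)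
          = K * (N0:ℝ)^(-γ) * r^k := by
        rw [← hK, hNkr k, Real.mul_rpow (by positivity) hN0pos.le]
        have hpow : ((2:ℝ)^k)^(-γ) = r^k := by
          rw [← Real.rpow_natCast 2 k, ← Real.rpow_mul (by norm_num), mul_comm,
            Real.rpow_mul (by norm_num), Real.rpow_natCast, hr]
        rw [hpow]
        ring
      calc (μ (A' k)).toReal ≤ (128 * C' * ((2:ℝ)^((1:ℝ)+|β|) * (4:ℝ)^|α|)^(1/p)) * ((2^k*N0 : ℕ):ℝ)^(-γ) := hst
        _ = K * (N0:ℝ)^(-γ) * r^k := hform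
    have hgsum : Summable (fun k : ℕ => K * (N0:ℝ)^(-γ) * r^k) :=
      (summable_geometric_of_lt_one hrnn hrlt).mul_left _
    have hgnn : ∀ k : ℕ, 0 ≤ K * (N0:ℝ)^(-γ) * r^k := fun k => by positivity
    have hchain : μ (Set.Ico b 1) ≤ ENNReal.ofReal (K * (N0:ℝ)^(-γ) * (1-r)⁻¹) := by
      calc μ (Set.Ico b 1) ≤ μ (⋃ k, A' k) := measure_mono hcover
        _ ≤ ∑' k, μ (A' k) := measure_iUnion_le _
        _ ≤ ∑' k, ENNReal.ofReal (K * (N0:ℝ)^(-γ) * r^k) := ENNReal.tsum_le_tsum hann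
        _ = ENNReal.ofReal (∑' k, K * (N0:ℝ)^(-γ) * r^k) :=
            (ENNReal.ofReal_tsum_of_nonneg hgnn hgsum).symm
        _ = ENNReal.ofReal (K * (N0:ℝ)^(-γ) * (1-r)⁻¹) := by
            rw [tsum_mul_left, tsum_geometric_of_lt_one hrnn hrlt]
    have hfinal : (μ (Set.Ico b 1)).toReal ≤ K * (N0:ℝ)^(-γ) * (1-r)⁻¹ := by
      have h1 := ENNReal.toReal_mono ENNReal.ofReal_ne_top hchain
      rwa [ENNReal.toReal_ofReal (by positivity)] at h1
    -- N0^{-γ} ≤ 16 (1-b)^γ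
    have hN0γ : (N0:ℝ)^(-γ) ≤ 16 * (1-b)^γ := by
      have h1 : (N0:ℝ)^(-γ) = ((N0:ℝ)⁻¹)^γ := by
        rw [Real.rpow_neg hN0pos.le, ← Real.inv_rpow hN0pos.le]
      have h2 : ((N0:ℝ)⁻¹)^γ ≤ (4*(1-b))^γ :=
        Real.rpow_le_rpow (by positivity) hN0up hγpos.le
      have h3 : (4*(1-b))^γ = (4:ℝ)^γ * (1-b)^γ :=
        Real.mul_rpow (by norm_num) h1b.le
      have h4 : (4:ℝ)^γ ≤ 16 := by
        have := Real.rpow_le_rpow_of_exponent_le (show (1:ℝ) ≤ 4 by norm_num) hγ2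
        have h42 : (4:ℝ)^(2:ℝ) = 16 := by
          rw [show (2:ℝ) = ((2:ℕ):ℝ) by norm_num, Real.rpow_natCast]; norm_num
        linarith
      calc (N0:ℝ)^(-γ) = ((N0:ℝ)⁻¹)^γ := h1
        _ ≤ (4:ℝ)^γ * (1-b)^γ := by rw [← h3]; exact h2
        _ ≤ 16 * (1-b)^γ := mul_le_mul_of_nonneg_right h4 hpowγnn
    calc (μ (Set.Ico b 1)).toReal ≤ K * (N0:ℝ)^(-γ) * (1-r)⁻¹ := hfinal
      _ ≤ K * (16 * (1-b)^γ) * (1-r)⁻¹ := by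
          apply mul_le_mul_of_nonneg_right _ (by positivity)
          exact mul_le_mul_of_nonneg_left hN0γ hKpos.le
      _ = (16*K/(1-r)) * (1-b)^γ := by
          field_simp
      _ ≤ (16*K/(1-r) + 4*μu + 4) * (1-b)^γ := by
          apply mul_le_mul_of_nonneg_right _ hpowγnn
          linarith
end

section
/- Let p > 1 and α > -1 with α < β. Then the classical Hilbert series operator H(a)(m) = ∑_{n=1}^∞ a_n/(m+n) is NOT bounded from l^p_α to l^p_β: there is no constant C > 0 such that ‖Ha‖_{p,β} ≤ C‖a‖_{p,α} for all a ∈ l^p_α. -/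
open Finset


lemma key_ident (c : ℝ) (hc : 0 < c) :
    ∀ (k : ℕ) (x : ℝ), 0 < x →
      ∑ j ∈ range (k+1), ((-1:ℝ)^j * (k.choose j)) / (x + j*c)
        = ((k.factorial : ℝ) * c^k) / ∏ j ∈ range (k+1), (x + j*c) := by
  intro k
  induction k with
  | zero => intro x hx; simp
  | succ k ih =>
    intro x hx
    have hxc : 0 < x + c := by linarith
    have hL : ∑ j ∈ range (k+1+1), ((-1:ℝ)^j * ((k+1).choose j)) / (x + j*c)
        = (∑ j ∈ range (k+1), ((-1:ℝ)^j * (k.choose j)) / (x + j*c))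
          - ∑ j ∈ range (k+1), ((-1:ℝ)^j * (k.choose j)) / ((x+c) + j*c) := by
      rw [Finset.sum_range_succ' (fun j => ((-1:ℝ)^j * ((k+1).choose j)) / (x + j*c)) (k+1)]
      push_cast
      have e1 : ∀ j ∈ range (k+1),
          ((-1:ℝ)^(j+1) * ((k+1).choose (j+1))) / (x + (j+1)*c)
          = ((-1:ℝ)^(j+1) * (k.choose (j+1))) / (x + (j+1)*c)
            + (-1) * (((-1:ℝ)^j * (k.choose j)) / ((x+c) + j*c)) := by
        intro j hj
        rw [Nat.choose_succ_succ]
        push_cast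
        have : x + (↑j + 1) * c = (x + c) + ↑j * c := by ring
        rw [this]
        ring
      rw [Finset.sum_congr rfl e1, Finset.sum_add_distrib]
      have e2 : ∑ j ∈ range (k+1), ((-1:ℝ)^(j+1) * (k.choose (j+1))) / (x + (j+1)*c)
          = (∑ j ∈ range (k+1), ((-1:ℝ)^j * (k.choose j)) / (x + j*c)) - 1/x := by
        have := Finset.sum_range_succ' (fun j => ((-1:ℝ)^j * (k.choose j)) / (x + j*c)) (k+1)
        have h2 : ∑ j ∈ range (k+1+1), ((-1:ℝ)^j * (k.choose j)) / (x + j*c)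
            = ∑ j ∈ range (k+1), ((-1:ℝ)^j * (k.choose j)) / (x + j*c) := by
          rw [Finset.sum_range_succ]
          simp [Nat.choose_succ_self]
        rw [h2] at this
        push_cast at this
        simp only [Nat.cast_zero, zero_mul, add_zero, pow_zero, one_mul, Nat.choose_zero_right,
          Nat.cast_one] at this
        linarith [this]
      rw [e2]
      simp [Finset.mul_sum]
      ring
    rw [hL, ih x hx, ih (x+c) hxc]
    -- now the product identity
    have hP1 : (0:ℝ) < ∏ j ∈ range (k+1), (x + j*c) := by
      apply Finset.prod_pos; intro j hj; positivity
    have hP2 : (0:ℝ) < ∏ j ∈ range (k+1), ((x+c) + j*c) := by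
      apply Finset.prod_pos; intro j hj; positivity
    have hsplit1 : ∏ j ∈ range (k+1+1), (x + j*c)
        = (∏ j ∈ range (k+1), (x + j*c)) * (x + (k+1)*c) := by
      rw [Finset.prod_range_succ, Nat.cast_add, Nat.cast_one]
    have hsplit2 : ∏ j ∈ range (k+1+1), (x + j*c)
        = (∏ j ∈ range (k+1), ((x+c) + j*c)) * x := by
      rw [Finset.prod_range_succ' (fun j => x + j*c) (k+1)]
      congr 1
      · apply Finset.prod_congr rfl; intro j hj; push_cast; ring
      · simp
    rw [hsplit1]
    rw [div_sub_div _ _ (ne_of_gt hP1) (ne_of_gt hP2)]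
    rw [div_eq_div_iff (by positivity) (by positivity)]
    have hx2 : (∏ j ∈ range (k+1), ((x+c) + j*c)) * x
        = (∏ j ∈ range (k+1), (x + j*c)) * (x + (k+1)*c) := by
      rw [← hsplit2, hsplit1]
    push_cast [Nat.factorial_succ]
    linear_combination ((k.factorial : ℝ) * c ^ k * ∏ j ∈ range (k+1), (x + ↑j * c)) * hx2

noncomputable def aSeq (k N : ℕ) : ℕ → ℝ := fun n =>
  if n ∈ Finset.Ico N (N + (k+1)*N) then
    ((-1:ℝ)^((n-N)/N) * ((k.choose ((n-N)/N)) : ℝ)) / (N:ℝ)^k else 0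

noncomputable def Phi (k N m : ℕ) : ℝ :=
  ∑ i ∈ Finset.range N, (k.factorial : ℝ) / ∏ j ∈ Finset.range (k+1), ((m:ℝ) + N + i + 2 + j*N)

lemma aSeq_eval (k N : ℕ) (hN : 0 < N) (m : ℕ) :
    ∑' n : ℕ, aSeq k N n / ((m:ℝ) + (n:ℝ) + 2) = Phi k N m := by
  have h0 : ∀ n ∉ Finset.Ico N (N + (k+1)*N), aSeq k N n / ((m:ℝ) + (n:ℝ) + 2) = 0 := by
    intro n hn
    simp only [aSeq, if_neg hn, zero_div]
  rw [tsum_eq_sum h0]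
  have hbij : ∑ n ∈ Finset.Ico N (N + (k+1)*N), aSeq k N n / ((m:ℝ) + (n:ℝ) + 2)
      = ∑ q ∈ Finset.range (k+1) ×ˢ Finset.range N,
          ((-1:ℝ)^q.1 * ((k.choose q.1) : ℝ)) / (N:ℝ)^k
            / ((m:ℝ) + ((N + q.1*N + q.2 : ℕ) : ℝ) + 2) := by
    apply Finset.sum_nbij' (fun n => ((n-N)/N, (n-N)%N)) (fun q => N + q.1*N + q.2)
    · intro n hn
      rw [Finset.mem_Ico] at hn
      rw [Finset.mem_product, Finset.mem_range, Finset.mem_range]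
      constructor
      · rw [Nat.div_lt_iff_lt_mul hN]
        omega
      · exact Nat.mod_lt _ hN
    · intro q hq
      rw [Finset.mem_product, Finset.mem_range, Finset.mem_range] at hq
      rw [Finset.mem_Ico]
      constructor
      · omega
      · have : q.1 * N + q.2 < (k+1)*N := by
          calc q.1*N + q.2 < q.1*N + N := by omega
          _ = (q.1+1)*N := by ring
          _ ≤ (k+1)*N := Nat.mul_le_mul_right _ (by omega)
        omega
    · intro n hn
      rw [Finset.mem_Ico] at hn
      have h1 : ((n-N)/N)*N + (n-N)%N = n - N := by
        rw [mul_comm]; exact Nat.div_add_mod _ _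
      show N + ((n-N)/N)*N + (n-N)%N = n
      omega
    · intro q hq
      rw [Finset.mem_product, Finset.mem_range, Finset.mem_range] at hq
      have h1 : N + q.1*N + q.2 - N = q.1*N + q.2 := by omega
      have h2 : (q.1*N + q.2)/N = q.1 := by
        rw [mul_comm, Nat.mul_add_div hN, Nat.div_eq_of_lt hq.2, add_zero]
      have h3 : (q.1*N + q.2)%N = q.2 := by
        rw [mul_comm, Nat.mul_add_mod, Nat.mod_eq_of_lt hq.2]
      ext <;> simp [h1, h2, h3]
    · intro n hn
      have hn' := hn
      rw [Finset.mem_Ico] at hn'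
      have h1 : ((n-N)/N)*N + (n-N)%N = n - N := by
        rw [mul_comm]; exact Nat.div_add_mod _ _
      have h2 : N + ((n-N)/N)*N + (n-N)%N = n := by omega
      rw [aSeq, if_pos hn, h2]
  rw [hbij, Finset.sum_product, Finset.sum_comm]
  unfold Phi
  apply Finset.sum_congr rfl
  intro i hi
  rw [Finset.mem_range] at hi
  have hx : (0:ℝ) < (m:ℝ) + N + i + 2 := by positivity
  have hkey := key_ident (N:ℝ) (by exact_mod_cast hN) k ((m:ℝ) + N + i + 2) hx
  have hNk : ((N:ℝ))^k ≠ 0 := by positivity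
  calc ∑ j ∈ range (k+1), ((-1:ℝ)^j * ((k.choose j) : ℝ)) / (N:ℝ)^k
          / ((m:ℝ) + ((N + j*N + i : ℕ) : ℝ) + 2)
      = (1/(N:ℝ)^k) * ∑ j ∈ range (k+1),
          ((-1:ℝ)^j * ((k.choose j) : ℝ)) / (((m:ℝ) + N + i + 2) + j*N) := by
        rw [Finset.mul_sum]
        apply Finset.sum_congr rfl
        intro j hj
        push_cast
        ring
    _ = (1/(N:ℝ)^k) * (((k.factorial : ℝ) * (N:ℝ)^k)
          / ∏ j ∈ range (k+1), (((m:ℝ) + N + i + 2) + j*N)) := by rw [hkey]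
    _ = (k.factorial : ℝ) / ∏ j ∈ range (k+1), ((m:ℝ) + N + i + 2 + j*N) := by
        field_simp

lemma choose_le_two_pow' (k j : ℕ) : k.choose j ≤ 2^k := by
  rcases le_or_gt j k with h | h
  · calc k.choose j ≤ ∑ m ∈ range (k+1), k.choose m :=
        Finset.single_le_sum (fun m _ => Nat.zero_le _) (Finset.mem_range.mpr (by omega))
    _ = 2^k := Nat.sum_range_choose k
  · simp [Nat.choose_eq_zero_of_lt h]

lemma aSeq_abs (k N : ℕ) (hN : 0 < N) (n : ℕ) :
    |aSeq k N n| ≤ (2:ℝ)^k / (N:ℝ)^k := by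
  have hNk : (0:ℝ) < (N:ℝ)^k := by positivity
  unfold aSeq
  split_ifs with h
  · rw [abs_div, abs_of_pos hNk, abs_mul, abs_pow, abs_neg, abs_one, one_pow, one_mul,
      Nat.abs_cast]
    apply (div_le_div_iff_of_pos_right hNk).mpr
    exact_mod_cast choose_le_two_pow' k _
  · simp only [abs_zero]
    positivity

lemma prod_factor_pos (k N m i : ℕ) :
    (0:ℝ) < ∏ j ∈ range (k+1), ((m:ℝ) + N + i + 2 + j*N) := by
  apply Finset.prod_pos; intro j _; positivity

lemma phi_pos (k N : ℕ) (hN : 0 < N) (m : ℕ) : 0 < Phi k N m := by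
  unfold Phi
  apply Finset.sum_pos
  · intro i _
    have := prod_factor_pos k N m i
    positivity
  · exact Finset.nonempty_range_iff.mpr (by omega)

lemma phi_upper (k N : ℕ) (hN : 0 < N) (m : ℕ) :
    Phi k N m ≤ (N:ℝ) * (k.factorial : ℝ) / ((m:ℝ)+2)^(k+1) := by
  have hm2 : (0:ℝ) < ((m:ℝ)+2)^(k+1) := by positivity
  have hterm : ∀ i ∈ range N, (k.factorial : ℝ) / ∏ j ∈ range (k+1), ((m:ℝ) + N + i + 2 + j*N)
      ≤ (k.factorial : ℝ) / ((m:ℝ)+2)^(k+1) := by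
    intro i _
    apply div_le_div_of_nonneg_left (by positivity) hm2
    calc ((m:ℝ)+2)^(k+1) = ∏ _j ∈ range (k+1), ((m:ℝ)+2) := by
          rw [Finset.prod_const, Finset.card_range]
      _ ≤ ∏ j ∈ range (k+1), ((m:ℝ) + N + i + 2 + j*N) := by
          apply Finset.prod_le_prod (fun j _ => by positivity)
          intro j _
          have : (0:ℝ) ≤ (N:ℝ) := by positivity
          have : (0:ℝ) ≤ (i:ℝ) := by positivity
          have : (0:ℝ) ≤ (j:ℝ)*(N:ℝ) := by positivity
          linarith
  calc Phi k N m ≤ ∑ _i ∈ range N, (k.factorial : ℝ) / ((m:ℝ)+2)^(k+1) :=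
        Finset.sum_le_sum hterm
    _ = (N:ℝ) * ((k.factorial : ℝ) / ((m:ℝ)+2)^(k+1)) := by
        rw [Finset.sum_const, Finset.card_range, nsmul_eq_mul]
    _ = (N:ℝ) * (k.factorial : ℝ) / ((m:ℝ)+2)^(k+1) := by ring

lemma phi_lower (k N : ℕ) (hN : 0 < N) (m : ℕ) (hm : m < 2*N) :
    (k.factorial : ℝ) / (((k:ℝ)+5)^(k+1) * (N:ℝ)^k) ≤ Phi k N m := by
  have hNpos : (0:ℝ) < N := by exact_mod_cast hN
  have hb : (0:ℝ) < (((k:ℝ)+5) * N)^(k+1) := by positivity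
  have hterm : ∀ i ∈ range N, (k.factorial : ℝ) / (((k:ℝ)+5) * (N:ℝ))^(k+1)
      ≤ (k.factorial : ℝ) / ∏ j ∈ range (k+1), ((m:ℝ) + N + i + 2 + j*N) := by
    intro i hi
    rw [Finset.mem_range] at hi
    apply div_le_div_of_nonneg_left (by positivity) (prod_factor_pos k N m i)
    calc ∏ j ∈ range (k+1), ((m:ℝ) + N + i + 2 + j*N)
        ≤ ∏ _j ∈ range (k+1), (((k:ℝ)+5) * (N:ℝ)) := by
          apply Finset.prod_le_prod (fun j _ => by positivity)
          intro j hj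
          rw [Finset.mem_range] at hj
          have hmr : (m:ℝ) ≤ 2*(N:ℝ) - 1 := by
            have : (m:ℝ) + 1 ≤ 2*(N:ℝ) := by exact_mod_cast hm
            linarith
          have hir : (i:ℝ) ≤ (N:ℝ) - 1 := by
            have : (i:ℝ) + 1 ≤ (N:ℝ) := by exact_mod_cast hi
            linarith
          have hjr : (j:ℝ) ≤ (k:ℝ) := by exact_mod_cast Nat.lt_succ_iff.mp hj
          have hjN : (j:ℝ)*(N:ℝ) ≤ (k:ℝ)*(N:ℝ) := by
            apply mul_le_mul_of_nonneg_right hjr hNpos.le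
          nlinarith
      _ = (((k:ℝ)+5) * (N:ℝ))^(k+1) := by rw [Finset.prod_const, Finset.card_range]
  calc (k.factorial : ℝ) / (((k:ℝ)+5)^(k+1) * (N:ℝ)^k)
      = (N:ℝ) * ((k.factorial : ℝ) / (((k:ℝ)+5) * (N:ℝ))^(k+1)) := by
        rw [mul_pow]
        rw [show (N:ℝ)^(k+1) = (N:ℝ)^k * N from by ring]
        field_simp
    _ = ∑ _i ∈ range N, (k.factorial : ℝ) / (((k:ℝ)+5) * (N:ℝ))^(k+1) := by
        rw [Finset.sum_const, Finset.card_range, nsmul_eq_mul]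
    _ ≤ Phi k N m := Finset.sum_le_sum hterm

set_option maxHeartbeats 1000000 in
theorem stmt_8 (p α β : ℝ) (hp : 1 < p) (hα : -1 < α) (hαβ : α < β) :
    ¬ ∃ C : ℝ, 0 < C ∧ ∀ a : ℕ → ℝ,
      Summable (fun n : ℕ => ((n : ℝ) + 1) ^ α * |a n| ^ p) →
      (∑' m : ℕ, ((m : ℝ) + 1) ^ β *
          |∑' n : ℕ, a n / ((m : ℝ) + (n : ℝ) + 2)| ^ p) ^ (1/p)
        ≤ C * (∑' n : ℕ, ((n : ℝ) + 1) ^ α * |a n| ^ p) ^ (1/p) := by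
  rintro ⟨C, hC, hbd⟩
  have hp0 : (0:ℝ) < p := by linarith
  set k := ⌈β⌉₊ with hkdef
  have hkβ : β ≤ (k:ℝ) := Nat.le_ceil β
  have hsum_exp : β - ((k:ℝ)+1)*p < -1 := by
    have h1 : (0:ℝ) < ((k:ℝ)+1) * (p-1) :=
      mul_pos (by positivity) (by linarith)
    nlinarith
  -- constants
  set c1 : ℝ := (k.factorial : ℝ) / (((k:ℝ)+5)^(k+1)) with hc1def
  have hc1 : 0 < c1 := by positivity
  set c6 : ℝ := min 1 ((2:ℝ)^β) * c1^p with hc6def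
  have hc6 : 0 < c6 := by
    apply mul_pos
    · exact lt_min one_pos (Real.rpow_pos_of_pos two_pos β)
    · exact Real.rpow_pos_of_pos hc1 p
  set C2 : ℝ := ((k:ℝ)+1) * ((k:ℝ)+2)^|α| * ((2:ℝ)^k)^p with hC2def
  have hC2 : 0 < C2 := by
    apply mul_pos (mul_pos (by positivity) (Real.rpow_pos_of_pos (by positivity) _))
    exact Real.rpow_pos_of_pos (by positivity) _
  set K : ℝ := C^p * C2 / c6 with hKdef
  have hK : 0 < K := by
    apply div_pos (mul_pos (Real.rpow_pos_of_pos hC p) hC2) hc6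
  -- the main estimate for every N
  have key : ∀ N : ℕ, 0 < N → ((N:ℝ))^(β-α) ≤ K := by
    intro N hN0
    have hNpos : (0:ℝ) < (N:ℝ) := by exact_mod_cast hN0
    have hQ : (0:ℝ) < ((N:ℝ)^k)^p := Real.rpow_pos_of_pos (by positivity) p
    set D : ℝ := (N:ℝ) / ((N:ℝ)^k)^p with hDdef
    have hD : 0 < D := div_pos hNpos hQ
    set a : ℕ → ℝ := aSeq k N with hadef
    have hvanish : ∀ n ∉ Finset.Ico N (N + (k+1)*N), ((n:ℝ)+1)^α * |a n|^p = 0 := by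
      intro n hn
      have : a n = 0 := by rw [hadef, aSeq, if_neg hn]
      rw [this, abs_zero, Real.zero_rpow (ne_of_gt hp0), mul_zero]
    have hsumm_a : Summable (fun n : ℕ => ((n:ℝ)+1)^α * |a n|^p) :=
      summable_of_ne_finset_zero hvanish
    -- bound T
    have hT : (∑' n : ℕ, ((n:ℝ)+1)^α * |a n|^p) ≤ C2 * (N:ℝ)^α * D := by
      rw [tsum_eq_sum hvanish]
      have hterm : ∀ n ∈ Finset.Ico N (N + (k+1)*N),
          ((n:ℝ)+1)^α * |a n|^p
            ≤ ((k:ℝ)+2)^|α| * (N:ℝ)^α * ((2:ℝ)^k / (N:ℝ)^k)^p := by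
        intro n hn
        rw [Finset.mem_Ico] at hn
        have h1 : ((n:ℝ)+1)^α ≤ ((k:ℝ)+2)^|α| * (N:ℝ)^α := by
          rcases le_or_gt 0 α with hα0 | hα0
          · have hle : ((n:ℝ)+1) ≤ ((k:ℝ)+2) * (N:ℝ) := by
              have hNk2 : N + (k+1)*N = (k+2)*N := by ring
              have : n + 1 ≤ (k+2)*N := by omega
              have := (Nat.cast_le (α := ℝ)).mpr this
              push_cast at this
              linarith
            calc ((n:ℝ)+1)^α ≤ (((k:ℝ)+2) * (N:ℝ))^α :=
                  Real.rpow_le_rpow (by positivity) hle hα0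
              _ = ((k:ℝ)+2)^α * (N:ℝ)^α := Real.mul_rpow (by positivity) (by positivity)
              _ = ((k:ℝ)+2)^|α| * (N:ℝ)^α := by rw [abs_of_nonneg hα0]
          · have hle : (N:ℝ) ≤ (n:ℝ)+1 := by
              have : (N:ℝ) ≤ (n:ℝ) := by exact_mod_cast hn.1
              linarith
            have h2 : ((n:ℝ)+1)^α ≤ (N:ℝ)^α :=
              Real.rpow_le_rpow_of_nonpos hNpos hle hα0.le
            have h3 : (1:ℝ) ≤ ((k:ℝ)+2)^|α| :=
              Real.one_le_rpow (by linarith [Nat.cast_nonneg (α := ℝ) k]) (abs_nonneg α)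
            calc ((n:ℝ)+1)^α ≤ (N:ℝ)^α := h2
              _ ≤ ((k:ℝ)+2)^|α| * (N:ℝ)^α := by
                  nlinarith [Real.rpow_pos_of_pos hNpos α]
        have h2 : |a n|^p ≤ ((2:ℝ)^k / (N:ℝ)^k)^p :=
          Real.rpow_le_rpow (abs_nonneg _) (aSeq_abs k N hN0 n) hp0.le
        have hb1 : (0:ℝ) ≤ ((n:ℝ)+1)^α := Real.rpow_nonneg (by positivity) α
        have hb2 : (0:ℝ) ≤ |a n|^p := Real.rpow_nonneg (abs_nonneg _) p
        calc ((n:ℝ)+1)^α * |a n|^p ≤ (((k:ℝ)+2)^|α| * (N:ℝ)^α) * ((2:ℝ)^k / (N:ℝ)^k)^p := by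
              apply mul_le_mul h1 h2 hb2
              positivity
          _ = ((k:ℝ)+2)^|α| * (N:ℝ)^α * ((2:ℝ)^k / (N:ℝ)^k)^p := by ring
      calc ∑ n ∈ Finset.Ico N (N + (k+1)*N), ((n:ℝ)+1)^α * |a n|^p
          ≤ (Finset.Ico N (N + (k+1)*N)).card
              • (((k:ℝ)+2)^|α| * (N:ℝ)^α * ((2:ℝ)^k / (N:ℝ)^k)^p) :=
            Finset.sum_le_card_nsmul _ _ _ hterm
        _ = (((k+1)*N : ℕ):ℝ) * (((k:ℝ)+2)^|α| * (N:ℝ)^α * ((2:ℝ)^k / (N:ℝ)^k)^p) := by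
            rw [Nat.card_Ico, nsmul_eq_mul]
            congr 2
            omega
        _ = C2 * (N:ℝ)^α * D := by
            rw [hC2def, hDdef, Real.div_rpow (by positivity) (by positivity)]
            push_cast
            field_simp
    -- rewrite the double sum
    have hg : ∀ m : ℕ, ((m:ℝ)+1)^β * |∑' n : ℕ, a n / ((m:ℝ) + (n:ℝ) + 2)|^p
        = ((m:ℝ)+1)^β * (Phi k N m)^p := by
      intro m
      rw [hadef, aSeq_eval k N hN0 m, abs_of_pos (phi_pos k N hN0 m)]
    -- summability of the β-weighted series
    have hgbound : ∀ m : ℕ, ((m:ℝ)+1)^β * (Phi k N m)^p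
        ≤ ((N:ℝ) * (k.factorial:ℝ))^p * ((m:ℝ)+1)^(β - ((k:ℝ)+1)*p) := by
      intro m
      have hm1 : (0:ℝ) < (m:ℝ)+1 := by positivity
      have h1 : Phi k N m ≤ (N:ℝ) * (k.factorial:ℝ) / ((m:ℝ)+1)^(k+1) := by
        refine (phi_upper k N hN0 m).trans ?_
        apply div_le_div_of_nonneg_left (by positivity) (by positivity)
        apply pow_le_pow_left₀ (by positivity)
        linarith
      have h2 : (Phi k N m)^p ≤ ((N:ℝ) * (k.factorial:ℝ) / ((m:ℝ)+1)^(k+1))^p :=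
        Real.rpow_le_rpow (le_of_lt (phi_pos k N hN0 m)) h1 hp0.le
      have h3 : ((N:ℝ) * (k.factorial:ℝ) / ((m:ℝ)+1)^(k+1))^p
          = ((N:ℝ) * (k.factorial:ℝ))^p * ((m:ℝ)+1)^(-(((k:ℝ)+1)*p)) := by
        rw [Real.div_rpow (by positivity) (by positivity)]
        rw [← Real.rpow_natCast ((m:ℝ)+1) (k+1), ← Real.rpow_mul hm1.le]
        rw [div_eq_mul_inv, ← Real.rpow_neg hm1.le]
        push_cast
        ring_nf
      have h4 : ((m:ℝ)+1)^β * ((m:ℝ)+1)^(-(((k:ℝ)+1)*p)) = ((m:ℝ)+1)^(β - ((k:ℝ)+1)*p) := by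
        rw [← Real.rpow_add hm1]
        ring_nf
      calc ((m:ℝ)+1)^β * (Phi k N m)^p
          ≤ ((m:ℝ)+1)^β * (((N:ℝ) * (k.factorial:ℝ))^p * ((m:ℝ)+1)^(-(((k:ℝ)+1)*p))) := by
            rw [← h3]
            exact mul_le_mul_of_nonneg_left h2 (Real.rpow_nonneg hm1.le β)
        _ = ((N:ℝ) * (k.factorial:ℝ))^p * ((m:ℝ)+1)^(β - ((k:ℝ)+1)*p) := by
            rw [← h4]; ring
    have hsumm_shift : Summable (fun m : ℕ => ((m:ℝ)+1)^(β - ((k:ℝ)+1)*p)) := by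
      have h0 : Summable (fun m : ℕ => ((m:ℝ))^(β - ((k:ℝ)+1)*p)) :=
        Real.summable_nat_rpow.mpr hsum_exp
      have := (summable_nat_add_iff (f := fun m : ℕ => ((m:ℝ))^(β - ((k:ℝ)+1)*p)) 1).mpr h0
      refine this.congr ?_
      intro m
      push_cast
      ring_nf
    have hgsumm : Summable (fun m : ℕ => ((m:ℝ)+1)^β * (Phi k N m)^p) := by
      apply Summable.of_nonneg_of_le ?_ hgbound (hsumm_shift.mul_left _)
      intro m
      have := phi_pos k N hN0 m
      positivity
    -- lower bound on S
    have hSlow : c6 * (N:ℝ)^β * D ≤ ∑' m : ℕ, ((m:ℝ)+1)^β * (Phi k N m)^p := by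
      have hterm : ∀ m ∈ Finset.Ico N (2*N),
          min 1 ((2:ℝ)^β) * (N:ℝ)^β * (c1 / (N:ℝ)^k)^p
            ≤ ((m:ℝ)+1)^β * (Phi k N m)^p := by
        intro m hm
        rw [Finset.mem_Ico] at hm
        have hm1 : (0:ℝ) < (m:ℝ)+1 := by positivity
        have h1 : min 1 ((2:ℝ)^β) * (N:ℝ)^β ≤ ((m:ℝ)+1)^β := by
          rcases le_or_gt 0 β with hβ0 | hβ0
          · have hle : (N:ℝ) ≤ (m:ℝ)+1 := by
              have : (N:ℝ) ≤ (m:ℝ) := by exact_mod_cast hm.1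
              linarith
            have h2 : (N:ℝ)^β ≤ ((m:ℝ)+1)^β := Real.rpow_le_rpow hNpos.le hle hβ0
            have h3 : min 1 ((2:ℝ)^β) ≤ 1 := min_le_left _ _
            nlinarith [Real.rpow_nonneg hNpos.le β]
          · have hle : (m:ℝ)+1 ≤ 2*(N:ℝ) := by
              have : (m:ℝ)+1 ≤ (2*N : ℕ) := by exact_mod_cast hm.2
              push_cast at this
              linarith
            have h2 : (2*(N:ℝ))^β ≤ ((m:ℝ)+1)^β :=
              Real.rpow_le_rpow_of_nonpos hm1 hle hβ0.le
            have h3 : (2*(N:ℝ))^β = (2:ℝ)^β * (N:ℝ)^β :=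
              Real.mul_rpow (by norm_num) hNpos.le
            have h4 : min 1 ((2:ℝ)^β) ≤ (2:ℝ)^β := min_le_right _ _
            nlinarith [Real.rpow_nonneg hNpos.le β]
        have h2 : (c1 / (N:ℝ)^k)^p ≤ (Phi k N m)^p := by
          apply Real.rpow_le_rpow (by positivity) ?_ hp0.le
          have := phi_lower k N hN0 m hm.2
          rw [hc1def, div_div]
          exact this
        apply mul_le_mul h1 h2 (by positivity) (Real.rpow_nonneg hm1.le β)
      calc c6 * (N:ℝ)^β * D
          = (Finset.Ico N (2*N)).card
              • (min 1 ((2:ℝ)^β) * (N:ℝ)^β * (c1 / (N:ℝ)^k)^p) := by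
            rw [Nat.card_Ico, nsmul_eq_mul]
            have hcard : ((2*N - N : ℕ):ℝ) = (N:ℝ) := by
              have : 2*N - N = N := by omega
              rw [this]
            rw [hcard, hc6def, hDdef, Real.div_rpow hc1.le (by positivity)]
            field_simp
        _ ≤ ∑ m ∈ Finset.Ico N (2*N), ((m:ℝ)+1)^β * (Phi k N m)^p :=
            Finset.card_nsmul_le_sum _ _ _ hterm
        _ ≤ ∑' m : ℕ, ((m:ℝ)+1)^β * (Phi k N m)^p := by
            apply Summable.sum_le_tsum _ ?_ hgsumm
            intro m _
            have := phi_pos k N hN0 m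
            positivity
    -- apply the hypothesis
    have hineq := hbd a hsumm_a
    have hSrw : (∑' m : ℕ, ((m:ℝ)+1)^β * |∑' n : ℕ, a n / ((m:ℝ) + (n:ℝ) + 2)|^p)
        = ∑' m : ℕ, ((m:ℝ)+1)^β * (Phi k N m)^p := tsum_congr hg
    rw [hSrw] at hineq
    set S : ℝ := ∑' m : ℕ, ((m:ℝ)+1)^β * (Phi k N m)^p with hSdef
    set T : ℝ := ∑' n : ℕ, ((n:ℝ)+1)^α * |a n|^p with hTdef
    have hS0 : 0 ≤ S := by
      apply tsum_nonneg
      intro m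
      have := phi_pos k N hN0 m
      positivity
    have hT0 : 0 ≤ T := by
      apply tsum_nonneg
      intro n
      positivity
    have hST : S ≤ C^p * T := by
      have h1 : (S^(1/p))^p ≤ (C * T^(1/p))^p :=
        Real.rpow_le_rpow (Real.rpow_nonneg hS0 _) hineq hp0.le
      have h2 : (S^(1/p))^p = S := by
        rw [← Real.rpow_mul hS0, one_div, inv_mul_cancel₀ (ne_of_gt hp0), Real.rpow_one]
      have h3 : (C * T^(1/p))^p = C^p * T := by
        rw [Real.mul_rpow hC.le (Real.rpow_nonneg hT0 _), ← Real.rpow_mul hT0,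
          one_div, inv_mul_cancel₀ (ne_of_gt hp0), Real.rpow_one]
      rw [h2, h3] at h1
      exact h1
    have hchain : c6 * (N:ℝ)^β * D ≤ C^p * C2 * (N:ℝ)^α * D := by
      calc c6 * (N:ℝ)^β * D ≤ S := hSlow
        _ ≤ C^p * T := hST
        _ ≤ C^p * (C2 * (N:ℝ)^α * D) :=
            mul_le_mul_of_nonneg_left hT (Real.rpow_nonneg hC.le p)
        _ = C^p * C2 * (N:ℝ)^α * D := by ring
    have hcancel : c6 * (N:ℝ)^β ≤ C^p * C2 * (N:ℝ)^α := by
      have := le_of_mul_le_mul_right hchain hD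
      linarith [this]
    rw [hKdef, Real.rpow_sub hNpos, div_le_div_iff₀ (Real.rpow_pos_of_pos hNpos α) hc6]
    nlinarith [hcancel]
  -- final contradiction
  set R : ℝ := K^((β-α)⁻¹) with hRdef
  obtain ⟨N, hNR⟩ := exists_nat_gt (max 1 R)
  have hN0 : 0 < N := by
    have h1 : (1:ℝ) ≤ max 1 R := le_max_left _ _
    have h2 : (1:ℝ) < (N:ℝ) := lt_of_le_of_lt h1 hNR
    exact_mod_cast Nat.cast_pos.mp (lt_trans one_pos h2)
  have hβα : 0 < β - α := by linarith
  have hcontra : K < ((N:ℝ))^(β-α) := by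
    have hR0 : 0 ≤ R := Real.rpow_nonneg hK.le _
    have hRN : R < (N:ℝ) := lt_of_le_of_lt (le_max_right 1 R) hNR
    have := Real.rpow_lt_rpow hR0 hRN hβα
    rwa [hRdef, Real.rpow_inv_rpow hK.le (ne_of_gt hβα)] at this
  exact absurd (key N hN0) (not_le.mpr hcontra)
end
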